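/- arXiv:2402.11321 — 4 statements merged into one kernel-verified Lean document; each statement's English description precedes it below -/
import Mathlib

section
/- Let H be a separable Hilbert space and let u_1,...,u_n, v_1,...,v_n be vectors in H. Then the Hilbert–Schmidt norm of the operator ∑_{i=1}^n u_i ⊗ v_i is at most (∑_{i=1}^n ‖u_i‖²)^{1/2} times the square root of the operator norm of ∑_{j=1}^n v_j ⊗ v_j. -/
open scoped InnerProductSpace

/-- The rank-one operator `x ⊗ y : u ↦ ⟨y, u⟩ x` on a real Hilbert space. -/
noncomputable def rankOne {H : Type*} [NormedAddCommGroup H] [InnerProductSpace ℝ H]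
    (x y : H) : H →L[ℝ] H :=
  (innerSL ℝ y).smulRight x

/-- The Hilbert–Schmidt norm of an operator, computed with respect to a Hilbert basis
(for a separable Hilbert space, indexed by `ℕ`). -/
noncomputable def hsNorm {H : Type*} [NormedAddCommGroup H] [InnerProductSpace ℝ H]
    (b : HilbertBasis ℕ ℝ H) (T : H →L[ℝ] H) : ℝ :=
  Real.sqrt (∑' i : ℕ, ‖T (b i)‖ ^ 2)

section Aux

variable {H : Type*} [NormedAddCommGroup H] [InnerProductSpace ℝ H] [CompleteSpace H]

lemma key_bound (n : ℕ) (v : Fin n → H) (c : Fin n → ℝ) :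
    ‖∑ i, c i • v i‖ ^ 2 ≤ ‖∑ j, rankOne (v j) (v j)‖ * ∑ i, c i ^ 2 := by
  set z := ∑ i, c i • v i with hz
  set S := ∑ j, rankOne (v j) (v j) with hS
  have hSz : S z = ∑ j, ⟪v j, z⟫_ℝ • v j := by
    rw [hS, ContinuousLinearMap.sum_apply]
    refine Finset.sum_congr rfl fun j _ => ?_
    simp [rankOne]
  have h2 : ∑ j, ⟪v j, z⟫_ℝ ^ 2 = ⟪S z, z⟫_ℝ := by
    rw [hSz, sum_inner]
    refine Finset.sum_congr rfl fun j _ => ?_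
    rw [real_inner_smul_left, sq]
  have h3 : ⟪S z, z⟫_ℝ ≤ ‖S‖ * ‖z‖ ^ 2 := by
    calc ⟪S z, z⟫_ℝ ≤ ‖S z‖ * ‖z‖ := real_inner_le_norm _ _
    _ ≤ (‖S‖ * ‖z‖) * ‖z‖ := by
        gcongr; exact S.le_opNorm z
    _ = ‖S‖ * ‖z‖ ^ 2 := by ring
  have h1 : ‖z‖ ^ 2 = ∑ i, c i * ⟪v i, z⟫_ℝ := by
    rw [← real_inner_self_eq_norm_sq]
    conv_lhs => rw [hz, sum_inner]
    refine Finset.sum_congr rfl fun i _ => ?_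
    rw [real_inner_smul_left]
  have hcs : (∑ i, c i * ⟪v i, z⟫_ℝ) ^ 2 ≤ (∑ i, c i ^ 2) * ∑ i, ⟪v i, z⟫_ℝ ^ 2 :=
    Finset.sum_mul_sq_le_sq_mul_sq _ _ _
  have h4 : (‖z‖ ^ 2) ^ 2 ≤ (∑ i, c i ^ 2) * (‖S‖ * ‖z‖ ^ 2) := by
    calc (‖z‖ ^ 2) ^ 2 = (∑ i, c i * ⟪v i, z⟫_ℝ) ^ 2 := by rw [h1]
    _ ≤ (∑ i, c i ^ 2) * ∑ i, ⟪v i, z⟫_ℝ ^ 2 := hcs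
    _ ≤ (∑ i, c i ^ 2) * (‖S‖ * ‖z‖ ^ 2) := by
        have hnn : (0:ℝ) ≤ ∑ i, c i ^ 2 := Finset.sum_nonneg fun i _ => sq_nonneg _
        rw [h2]
        exact mul_le_mul_of_nonneg_left h3 hnn
  rcases eq_or_lt_of_le (sq_nonneg ‖z‖) with h0 | h0
  · rw [← h0]
    positivity
  · have := (mul_le_mul_iff_of_pos_right h0).mp (by nlinarith : (‖z‖^2) * (‖z‖^2) ≤ (‖S‖ * ∑ i, c i ^ 2) * ‖z‖^2)
    linarith

lemma summable_inner_sq (b : HilbertBasis ℕ ℝ H) (x : H) :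
    Summable fun k => ⟪x, b k⟫_ℝ ^ 2 := by
  have := b.summable_inner_mul_inner x x
  refine this.congr fun k => ?_
  rw [sq, real_inner_comm (b k) x]

lemma tsum_inner_sq (b : HilbertBasis ℕ ℝ H) (x : H) :
    ∑' k, ⟪x, b k⟫_ℝ ^ 2 = ‖x‖ ^ 2 := by
  rw [← real_inner_self_eq_norm_sq, ← b.tsum_inner_mul_inner x x]
  exact tsum_congr fun k => by rw [sq, real_inner_comm (b k) x]

lemma expand (b : HilbertBasis ℕ ℝ H) (n : ℕ) (x y : Fin n → H) :
    ∑' k, ‖∑ i, ⟪x i, b k⟫_ℝ • y i‖ ^ 2 = ∑ i, ∑ j, ⟪x i, x j⟫_ℝ * ⟪y i, y j⟫_ℝ := by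
  have hterm : ∀ k : ℕ, ‖∑ i, ⟪x i, b k⟫_ℝ • y i‖ ^ 2
      = ∑ i, ∑ j, (⟪x i, b k⟫_ℝ * ⟪b k, x j⟫_ℝ) * ⟪y i, y j⟫_ℝ := by
    intro k
    rw [← real_inner_self_eq_norm_sq, sum_inner]
    refine Finset.sum_congr rfl fun i _ => ?_
    rw [real_inner_smul_left, inner_sum, Finset.mul_sum]
    refine Finset.sum_congr rfl fun j _ => ?_
    rw [real_inner_smul_right, real_inner_comm (x j) (b k)]
    ring
  rw [tsum_congr hterm]
  rw [Summable.tsum_finsetSum (fun i _ => ?_)]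
  · refine Finset.sum_congr rfl fun i _ => ?_
    rw [Summable.tsum_finsetSum (fun j _ => ((b.summable_inner_mul_inner (x i) (x j)).mul_right _))]
    refine Finset.sum_congr rfl fun j _ => ?_
    rw [tsum_mul_right, b.tsum_inner_mul_inner]
  · exact summable_sum fun j _ => (b.summable_inner_mul_inner (x i) (x j)).mul_right _

end Aux

/-- For vectors `u_1,…,u_n, v_1,…,v_n` in a separable Hilbert space,
`‖∑ u_i ⊗ v_i‖₂ ≤ (∑ ‖u_i‖²)^{1/2} ‖∑ v_j ⊗ v_j‖^{1/2}`. -/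
theorem hsNorm_sum_rankOne_le {H : Type*} [NormedAddCommGroup H] [InnerProductSpace ℝ H]
    [CompleteSpace H] (b : HilbertBasis ℕ ℝ H) (n : ℕ) (u v : Fin n → H) :
    hsNorm b (∑ i, rankOne (u i) (v i)) ≤
      Real.sqrt (∑ i, ‖u i‖ ^ 2) * Real.sqrt ‖∑ j, rankOne (v j) (v j)‖ := by
  set S := ∑ j, rankOne (v j) (v j) with hS
  have hTapp : ∀ k : ℕ, (∑ i, rankOne (u i) (v i)) (b k) = ∑ i, ⟪v i, b k⟫_ℝ • u i := by
    intro k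
    rw [ContinuousLinearMap.sum_apply]
    exact Finset.sum_congr rfl fun i _ => by simp [rankOne]
  have hA : ∑' k, ‖(∑ i, rankOne (u i) (v i)) (b k)‖ ^ 2
      = ∑' k, ‖∑ i, ⟪u i, b k⟫_ℝ • v i‖ ^ 2 := by
    rw [tsum_congr fun k => by rw [hTapp k], expand b n v u, expand b n u v]
    rw [Finset.sum_comm]
    exact Finset.sum_congr rfl fun i _ => Finset.sum_congr rfl fun j _ => by
      rw [real_inner_comm (v j) (v i), real_inner_comm (u j) (u i), mul_comm]
  have hbound : ∀ k : ℕ, ‖∑ i, ⟪u i, b k⟫_ℝ • v i‖ ^ 2 ≤ ‖S‖ * ∑ i, ⟪u i, b k⟫_ℝ ^ 2 :=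
    fun k => key_bound n v _
  have hsummR : Summable fun k => ‖S‖ * ∑ i, ⟪u i, b k⟫_ℝ ^ 2 :=
    (summable_sum (fun i _ => summable_inner_sq b (u i))).mul_left _
  have hsummL : Summable fun k => ‖∑ i, ⟪u i, b k⟫_ℝ • v i‖ ^ 2 :=
    Summable.of_nonneg_of_le (fun k => sq_nonneg _) hbound hsummR
  have hle : ∑' k, ‖∑ i, ⟪u i, b k⟫_ℝ • v i‖ ^ 2 ≤ (∑ i, ‖u i‖ ^ 2) * ‖S‖ := by
    calc ∑' k, ‖∑ i, ⟪u i, b k⟫_ℝ • v i‖ ^ 2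
        ≤ ∑' k, ‖S‖ * ∑ i, ⟪u i, b k⟫_ℝ ^ 2 := Summable.tsum_le_tsum hbound hsummL hsummR
      _ = ‖S‖ * ∑ i, ‖u i‖ ^ 2 := by
          rw [tsum_mul_left, Summable.tsum_finsetSum (fun i _ => summable_inner_sq b (u i))]
          congr 1
          exact Finset.sum_congr rfl fun i _ => tsum_inner_sq b (u i)
      _ = (∑ i, ‖u i‖ ^ 2) * ‖S‖ := mul_comm _ _
  rw [hsNorm, ← Real.sqrt_mul (Finset.sum_nonneg fun i _ => sq_nonneg _)]
  apply Real.sqrt_le_sqrt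
  rw [hA]
  exact hle
end

section
/- Let A and H be self-adjoint operators on a finite-dimensional Hilbert space and let f : ℝ → ℝ be continuously differentiable with Lipschitz derivative f'. Define R_f(A;H) := tr(f(A+H)) − tr(f(A)) − tr(f'(A)H). Then |R_f(A;H)| ≤ (Lip(f')/2) ‖H‖₂², where Lip(f') is the Lipschitz constant of f' and ‖·‖₂ is the Hilbert–Schmidt (Frobenius) norm. -/
open Matrix

/-- For a real symmetric matrix `A`, `matFun f A` is `f(A)` defined via the spectral
decomposition `f(A) = U diagonal (f ∘ eigenvalues) U*` (and junk value `0` if `A` is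
not Hermitian). -/
noncomputable def matFun {d : ℕ} (f : ℝ → ℝ) (A : Matrix (Fin d) (Fin d) ℝ) :
    Matrix (Fin d) (Fin d) ℝ :=
  if h : A.IsHermitian then
    (h.eigenvectorUnitary : Matrix (Fin d) (Fin d) ℝ) * Matrix.diagonal (f ∘ h.eigenvalues) *
      star (h.eigenvectorUnitary : Matrix (Fin d) (Fin d) ℝ)
  else 0

open intervalIntegral in

lemma taylor_lip (f : ℝ → ℝ) (L : NNReal) (hf : ContDiff ℝ 1 f)
    (hLip : LipschitzWith L (deriv f)) (a b : ℝ) :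
    |f b - f a - deriv f a * (b - a)| ≤ (L : ℝ) / 2 * (b - a) ^ 2 := by
  have hdiff : Differentiable ℝ f := hf.differentiable one_ne_zero
  have hcont : Continuous (deriv f) := hf.continuous_deriv le_rfl
  have hint : ∀ x y : ℝ, IntervalIntegrable (deriv f) MeasureTheory.volume x y :=
    fun x y => hcont.intervalIntegrable x y
  have hftc : f b - f a = ∫ t in a..b, deriv f t :=
    (integral_deriv_eq_sub (fun x _ => hdiff x) (hint a b)).symm
  have hconst : deriv f a * (b - a) = ∫ t in a..b, deriv f a := by
    rw [integral_const, smul_eq_mul]; ring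
  have key : f b - f a - deriv f a * (b - a) = ∫ t in a..b, (deriv f t - deriv f a) := by
    rw [hftc, hconst, integral_sub (hint a b) (intervalIntegrable_const)]
  have hbd : ∀ t : ℝ, |deriv f t - deriv f a| ≤ (L : ℝ) * |t - a| := fun t => by
    simpa [Real.dist_eq] using hLip.dist_le_mul t a
  rw [key]
  rcases le_total a b with hab | hab
  · calc |∫ t in a..b, (deriv f t - deriv f a)|
        ≤ ∫ t in a..b, |deriv f t - deriv f a| := by
          simpa using intervalIntegral.norm_integral_le_integral_norm (f := fun t => deriv f t - deriv f a) hab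
      _ ≤ ∫ t in a..b, (L : ℝ) * (t - a) := by
          apply intervalIntegral.integral_mono_on hab
          · exact ((hcont.sub continuous_const).abs).intervalIntegrable a b
          · exact (Continuous.intervalIntegrable (by continuity) a b)
          · intro t ht
            have := hbd t
            rwa [abs_of_nonneg (by linarith [ht.1] : (0:ℝ) ≤ t - a)] at this
      _ = (L : ℝ) / 2 * (b - a) ^ 2 := by
          rw [intervalIntegral.integral_const_mul]
          have : (∫ t in a..b, (t - a)) = (b - a) ^ 2 / 2 := by
            rw [integral_sub (Continuous.intervalIntegrable (by continuity) a b) intervalIntegrable_const,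
              integral_id, integral_const, smul_eq_mul]
            ring
          rw [this]; ring
  · calc |∫ t in a..b, (deriv f t - deriv f a)|
        = |∫ t in b..a, (deriv f t - deriv f a)| := by
          rw [intervalIntegral.integral_symm, abs_neg]
      _ ≤ ∫ t in b..a, |deriv f t - deriv f a| := by
          simpa using intervalIntegral.norm_integral_le_integral_norm (f := fun t => deriv f t - deriv f a) hab
      _ ≤ ∫ t in b..a, (L : ℝ) * (a - t) := by
          apply intervalIntegral.integral_mono_on hab
          · exact ((hcont.sub continuous_const).abs).intervalIntegrable b a
          · exact (Continuous.intervalIntegrable (by continuity) b a)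
          · intro t ht
            have := hbd t
            rw [abs_sub_comm t a] at this
            rwa [abs_of_nonneg (by linarith [ht.2] : (0:ℝ) ≤ a - t)] at this
      _ = (L : ℝ) / 2 * (b - a) ^ 2 := by
          rw [intervalIntegral.integral_const_mul]
          have : (∫ t in b..a, (a - t)) = (a - b) ^ 2 / 2 := by
            rw [integral_sub intervalIntegrable_const (Continuous.intervalIntegrable (by continuity) b a),
              integral_id, integral_const, smul_eq_mul]
            ring
          rw [this]; ring

lemma trace_matFun {d : ℕ} (g : ℝ → ℝ) (X : Matrix (Fin d) (Fin d) ℝ) (hX : X.IsHermitian) :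
    (matFun g X).trace = ∑ i, g (hX.eigenvalues i) := by
  rw [matFun, dif_pos hX, Matrix.trace_mul_cycle,
    mem_unitaryGroup_iff'.mp hX.eigenvectorUnitary.2, Matrix.one_mul,
    Matrix.trace_diagonal]
  rfl

set_option maxHeartbeats 1000000 in
/-- For self-adjoint `A, H` on a finite-dimensional Hilbert space and
`f ∈ C¹` with Lipschitz derivative, the first-order Taylor remainder
`R_f(A;H) = tr f(A+H) − tr f(A) − tr (f'(A) H)` satisfies
`|R_f(A;H)| ≤ (Lip(f')/2) ‖H‖₂²`. -/
theorem abs_trace_taylor_remainder_le {d : ℕ} (A H : Matrix (Fin d) (Fin d) ℝ)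
    (hA : A.IsHermitian) (hH : H.IsHermitian) (f : ℝ → ℝ) (L : NNReal)
    (hf : ContDiff ℝ 1 f) (hLip : LipschitzWith L (deriv f)) :
    |(matFun f (A + H)).trace - (matFun f A).trace - (matFun (deriv f) A * H).trace| ≤
      (L : ℝ) / 2 * ∑ i, ∑ j, (H i j) ^ 2 := by
  have hAH : (A + H).IsHermitian := hA.add hH
  set U : Matrix (Fin d) (Fin d) ℝ := (hA.eigenvectorUnitary : Matrix (Fin d) (Fin d) ℝ) with hUdef
  set V : Matrix (Fin d) (Fin d) ℝ := (hAH.eigenvectorUnitary : Matrix (Fin d) (Fin d) ℝ) with hVdef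
  set lam : Fin d → ℝ := hA.eigenvalues with hlamdef
  set mu : Fin d → ℝ := hAH.eigenvalues with hmudef
  have hU1 : star U * U = 1 := mem_unitaryGroup_iff'.mp hA.eigenvectorUnitary.2
  have hU2 : U * star U = 1 := mem_unitaryGroup_iff.mp hA.eigenvectorUnitary.2
  have hV1 : star V * V = 1 := mem_unitaryGroup_iff'.mp hAH.eigenvectorUnitary.2
  have hV2 : V * star V = 1 := mem_unitaryGroup_iff.mp hAH.eigenvectorUnitary.2
  set M : Matrix (Fin d) (Fin d) ℝ := star U * V with hMdef
  have hM1 : star M * M = 1 := by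
    rw [hMdef, Matrix.star_mul, star_star, Matrix.mul_assoc, ← Matrix.mul_assoc U, hU2,
      Matrix.one_mul, hV1]
  have hM2 : M * star M = 1 := by
    rw [hMdef, Matrix.star_mul, star_star, Matrix.mul_assoc, ← Matrix.mul_assoc V, hV2,
      Matrix.one_mul, hU1]
  -- row and column sums of squares of M
  have hrow : ∀ i, ∑ j, (M i j) ^ 2 = 1 := by
    intro i
    have := congrFun (congrFun hM2 i) i
    simp only [Matrix.mul_apply, Matrix.one_apply_eq, star_apply, star_trivial] at this
    rw [← this]
    exact Finset.sum_congr rfl fun j _ => (sq (M i j)).symm ▸ rfl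
  have hcol : ∀ j, ∑ i, (M i j) ^ 2 = 1 := by
    intro j
    have := congrFun (congrFun hM1 j) j
    simp only [Matrix.mul_apply, Matrix.one_apply_eq, star_apply, star_trivial] at this
    rw [← this]
    exact Finset.sum_congr rfl fun i _ => by ring
  -- spectral decompositions conjugated by U
  have hAdiag : star U * A * U = diagonal lam := by
    have := hA.conjStarAlgAut_star_eigenvectorUnitary
    simpa using this
  set N : Matrix (Fin d) (Fin d) ℝ := M * diagonal mu * star M with hNdef
  have hAHdiag : star U * (A + H) * U = N := by
    have hs : A + H = V * diagonal mu * star V := by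
      have := hAH.spectral_theorem; simpa using this
    rw [hs, hNdef, hMdef, Matrix.star_mul, star_star]
    simp only [Matrix.mul_assoc]
  set K : Matrix (Fin d) (Fin d) ℝ := star U * H * U with hKdef
  have hKN : K = N - diagonal lam := by
    rw [hKdef, ← hAHdiag, ← hAdiag, Matrix.mul_add, Matrix.add_mul]
    abel
  -- N diagonal entries
  have hNii : ∀ i, N i i = ∑ j, mu j * (M i j) ^ 2 := by
    intro i
    rw [hNdef]
    simp only [Matrix.mul_apply, Matrix.diagonal_apply, mul_ite, mul_zero,
      Finset.sum_ite_eq', Finset.mem_univ, if_true, star_apply, star_trivial]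
    exact Finset.sum_congr rfl fun j _ => by ring
  -- the three traces
  have E1 : (matFun f (A + H)).trace = ∑ j, f (mu j) := trace_matFun f _ hAH
  have E2 : (matFun f A).trace = ∑ i, f (lam i) := trace_matFun f _ hA
  have E3 : (matFun (deriv f) A * H).trace = ∑ i, deriv f (lam i) * K i i := by
    rw [matFun, dif_pos hA, Matrix.trace_mul_cycle, Matrix.trace_mul_cycle, hKdef]
    rw [show star (hA.eigenvectorUnitary : Matrix (Fin d) (Fin d) ℝ) * H *
        ((hA.eigenvectorUnitary : Matrix (Fin d) (Fin d) ℝ) * diagonal (deriv f ∘ lam))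
        = (star U * H * U) * diagonal (deriv f ∘ lam) by
      simp only [hUdef, Matrix.mul_assoc]]
    rw [Matrix.trace_mul_comm]
    simp only [Matrix.trace, Matrix.diag, Matrix.diagonal_mul, Function.comp_apply]
  -- rewrite the remainder as a double sum
  have key : (matFun f (A + H)).trace - (matFun f A).trace - (matFun (deriv f) A * H).trace
      = ∑ i, ∑ j, (M i j) ^ 2 *
          (f (mu j) - f (lam i) - deriv f (lam i) * (mu j - lam i)) := by
    rw [E1, E2, E3]
    have h1 : ∑ j, f (mu j) = ∑ i, ∑ j, (M i j) ^ 2 * f (mu j) := by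
      rw [Finset.sum_comm]
      refine Finset.sum_congr rfl fun j _ => ?_
      rw [← Finset.sum_mul, hcol j, one_mul]
    have h2 : ∑ i, f (lam i) = ∑ i, ∑ j, (M i j) ^ 2 * f (lam i) := by
      refine Finset.sum_congr rfl fun i _ => ?_
      rw [← Finset.sum_mul, hrow i, one_mul]
    have h3 : ∑ i, deriv f (lam i) * K i i
        = ∑ i, ∑ j, (M i j) ^ 2 * (deriv f (lam i) * (mu j - lam i)) := by
      refine Finset.sum_congr rfl fun i _ => ?_
      rw [hKN]
      simp only [Matrix.sub_apply, Matrix.diagonal_apply_eq, hNii i]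
      have e : ∑ j, (M i j) ^ 2 * (deriv f (lam i) * (mu j - lam i))
          = deriv f (lam i) * (∑ j, mu j * (M i j) ^ 2)
            - deriv f (lam i) * lam i * (∑ j, (M i j) ^ 2) := by
        rw [Finset.mul_sum, Finset.mul_sum, ← Finset.sum_sub_distrib]
        exact Finset.sum_congr rfl fun j _ => by ring
      rw [e, hrow i]
      ring
    rw [h1, h2, h3, ← Finset.sum_sub_distrib, ← Finset.sum_sub_distrib]
    refine Finset.sum_congr rfl fun i _ => ?_
    rw [← Finset.sum_sub_distrib, ← Finset.sum_sub_distrib]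
    exact Finset.sum_congr rfl fun j _ => by ring
  -- Frobenius identity: ∑∑ P (mu-lam)² = ∑∑ H²
  have hmulU : ∀ X Y : Matrix (Fin d) (Fin d) ℝ,
      (star U * X * U) * (star U * Y * U) = star U * (X * Y) * U := by
    intro X Y
    simp only [Matrix.mul_assoc]
    rw [← Matrix.mul_assoc U, hU2, Matrix.one_mul]
  have hmulM : ∀ X Y : Matrix (Fin d) (Fin d) ℝ,
      (M * X * star M) * (M * Y * star M) = M * (X * Y) * star M := by
    intro X Y
    simp only [Matrix.mul_assoc]
    rw [← Matrix.mul_assoc (star M), hM1, Matrix.one_mul]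
  have trHH : ∑ i, ∑ j, (H i j) ^ 2 = (H * H).trace := by
    simp only [Matrix.trace, Matrix.diag, Matrix.mul_apply]
    refine Finset.sum_congr rfl fun i _ => Finset.sum_congr rfl fun j _ => ?_
    have : H j i = H i j := by
      have := hH.apply i j
      simpa using this
    rw [this]; ring
  have trKK : (K * K).trace = (H * H).trace := by
    rw [hKdef, hmulU H H, Matrix.trace_mul_cycle, hU2, Matrix.one_mul]
  have trNN : (N * N).trace = ∑ j, mu j ^ 2 := by
    rw [hNdef, hmulM, Matrix.diagonal_mul_diagonal, Matrix.trace_mul_cycle, hM1,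
      Matrix.one_mul, Matrix.trace_diagonal]
    exact Finset.sum_congr rfl fun j _ => (sq (mu j)).symm
  have trDN : (diagonal lam * N).trace = ∑ i, lam i * N i i := by
    simp [Matrix.trace, Matrix.diag, Matrix.diagonal_mul]
  have trDD : (diagonal lam * diagonal lam).trace = ∑ i, lam i ^ 2 := by
    rw [Matrix.diagonal_mul_diagonal, Matrix.trace_diagonal]
    exact Finset.sum_congr rfl fun i _ => (sq (lam i)).symm
  have trKK' : (K * K).trace
      = (∑ j, mu j ^ 2) - 2 * (∑ i, lam i * N i i) + ∑ i, lam i ^ 2 := by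
    rw [hKN, Matrix.sub_mul, Matrix.mul_sub, Matrix.mul_sub, Matrix.trace_sub,
      Matrix.trace_sub, Matrix.trace_sub, trNN, trDN, trDD,
      Matrix.trace_mul_comm N (diagonal lam), trDN]
    ring
  have FI : ∑ i, ∑ j, (M i j) ^ 2 * (mu j - lam i) ^ 2 = ∑ i, ∑ j, (H i j) ^ 2 := by
    have lhs : ∑ i, ∑ j, (M i j) ^ 2 * (mu j - lam i) ^ 2
        = (∑ j, mu j ^ 2) - 2 * (∑ i, lam i * N i i) + ∑ i, lam i ^ 2 := by
      have e1 : ∀ i, ∑ j, (M i j) ^ 2 * (mu j - lam i) ^ 2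
          = (∑ j, mu j ^ 2 * (M i j) ^ 2) - 2 * lam i * (∑ j, mu j * (M i j) ^ 2)
            + lam i ^ 2 * (∑ j, (M i j) ^ 2) := by
        intro i
        rw [Finset.mul_sum, Finset.mul_sum, ← Finset.sum_sub_distrib, ← Finset.sum_add_distrib]
        exact Finset.sum_congr rfl fun j _ => by ring
      calc ∑ i, ∑ j, (M i j) ^ 2 * (mu j - lam i) ^ 2
          = ∑ i, ((∑ j, mu j ^ 2 * (M i j) ^ 2) - 2 * lam i * (∑ j, mu j * (M i j) ^ 2)
            + lam i ^ 2 * (∑ j, (M i j) ^ 2)) := Finset.sum_congr rfl fun i _ => e1 i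
        _ = (∑ i, ∑ j, mu j ^ 2 * (M i j) ^ 2) - 2 * (∑ i, lam i * N i i)
            + ∑ i, lam i ^ 2 := by
            rw [Finset.mul_sum, ← Finset.sum_sub_distrib, ← Finset.sum_add_distrib]
            refine Finset.sum_congr rfl fun i _ => ?_
            rw [hNii i, hrow i]
            ring
        _ = (∑ j, mu j ^ 2) - 2 * (∑ i, lam i * N i i) + ∑ i, lam i ^ 2 := by
            congr 1
            congr 1
            rw [Finset.sum_comm]
            refine Finset.sum_congr rfl fun j _ => ?_
            rw [← Finset.mul_sum, hcol j, mul_one]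
    rw [lhs, trHH, ← trKK, trKK']
  -- final estimate
  rw [key, ← FI]
  calc |∑ i, ∑ j, (M i j) ^ 2 * (f (mu j) - f (lam i) - deriv f (lam i) * (mu j - lam i))|
      ≤ ∑ i, |∑ j, (M i j) ^ 2 * (f (mu j) - f (lam i) - deriv f (lam i) * (mu j - lam i))| :=
        Finset.abs_sum_le_sum_abs _ _
    _ ≤ ∑ i, ∑ j, |(M i j) ^ 2 * (f (mu j) - f (lam i) - deriv f (lam i) * (mu j - lam i))| :=
        Finset.sum_le_sum fun i _ => Finset.abs_sum_le_sum_abs _ _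
    _ ≤ ∑ i, ∑ j, (M i j) ^ 2 * ((L : ℝ) / 2 * (mu j - lam i) ^ 2) := by
        refine Finset.sum_le_sum fun i _ => Finset.sum_le_sum fun j _ => ?_
        rw [abs_mul, abs_of_nonneg (sq_nonneg (M i j))]
        exact mul_le_mul_of_nonneg_left (taylor_lip f L hf hLip (lam i) (mu j))
          (sq_nonneg (M i j))
    _ = (L : ℝ) / 2 * ∑ i, ∑ j, (M i j) ^ 2 * (mu j - lam i) ^ 2 := by
        rw [Finset.mul_sum]
        refine Finset.sum_congr rfl fun i _ => ?_
        rw [Finset.mul_sum]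
        exact Finset.sum_congr rfl fun j _ => by ring
end

section
/- Let A be a self-adjoint operator on a finite-dimensional Hilbert space, H a self-adjoint operator, and f : ℝ → ℝ continuously differentiable. Then the derivative at t = 0 of the function t ↦ tr(f(A + tH)) equals tr(f'(A) H). -/
open Matrix

open Polynomial

variable {d : ℕ}

/-- conjugation of a diagonal matrix by the eigenvector unitary -/
noncomputable def conjU {M : Matrix (Fin d) (Fin d) ℝ} (hM : M.IsHermitian)
    (v : Fin d → ℝ) : Matrix (Fin d) (Fin d) ℝ :=
  (hM.eigenvectorUnitary : Matrix (Fin d) (Fin d) ℝ) * Matrix.diagonal v *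
    star (hM.eigenvectorUnitary : Matrix (Fin d) (Fin d) ℝ)

lemma starU_mul_U_mul {M : Matrix (Fin d) (Fin d) ℝ} (hM : M.IsHermitian)
    (X : Matrix (Fin d) (Fin d) ℝ) :
    star (hM.eigenvectorUnitary : Matrix (Fin d) (Fin d) ℝ) *
      ((hM.eigenvectorUnitary : Matrix (Fin d) (Fin d) ℝ) * X) = X := by
  rw [← mul_assoc, Unitary.coe_star_mul_self, one_mul]

lemma matFun_of_isHermitian {f : ℝ → ℝ} {M : Matrix (Fin d) (Fin d) ℝ} (hM : M.IsHermitian) :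
    matFun f M = conjU hM (fun i => f (hM.eigenvalues i)) := by
  rw [matFun, dif_pos hM]; rfl

lemma trace_conjU {M : Matrix (Fin d) (Fin d) ℝ} (hM : M.IsHermitian) (v : Fin d → ℝ) :
    (conjU hM v).trace = ∑ i, v i := by
  rw [conjU, Matrix.trace_mul_cycle, Unitary.coe_star_mul_self, one_mul, Matrix.trace_diagonal]

lemma trace_matFun_s4 {f : ℝ → ℝ} {M : Matrix (Fin d) (Fin d) ℝ} (hM : M.IsHermitian) :
    (matFun f M).trace = ∑ i, f (hM.eigenvalues i) := by
  rw [matFun_of_isHermitian hM, trace_conjU]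

lemma conjU_mul {M : Matrix (Fin d) (Fin d) ℝ} (hM : M.IsHermitian) (v w : Fin d → ℝ) :
    conjU hM v * conjU hM w = conjU hM (v * w) := by
  simp only [conjU, mul_assoc, starU_mul_U_mul hM]
  rw [← mul_assoc (Matrix.diagonal v), diagonal_mul_diagonal]
  rfl

lemma conjU_add {M : Matrix (Fin d) (Fin d) ℝ} (hM : M.IsHermitian) (v w : Fin d → ℝ) :
    conjU hM v + conjU hM w = conjU hM (v + w) := by
  simp only [conjU]
  rw [← Matrix.add_mul, ← Matrix.mul_add, diagonal_add]
  rfl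

lemma conjU_sub {M : Matrix (Fin d) (Fin d) ℝ} (hM : M.IsHermitian) (v w : Fin d → ℝ) :
    conjU hM v - conjU hM w = conjU hM (v - w) := by
  simp only [conjU]
  rw [← Matrix.sub_mul, ← Matrix.mul_sub, diagonal_sub]
  rfl

lemma conjU_smul {M : Matrix (Fin d) (Fin d) ℝ} (hM : M.IsHermitian) (a : ℝ) (v : Fin d → ℝ) :
    a • conjU hM v = conjU hM (a • v) := by
  simp only [conjU]
  rw [← smul_mul_assoc, ← mul_smul_comm, diagonal_smul]

lemma conjU_one {M : Matrix (Fin d) (Fin d) ℝ} (hM : M.IsHermitian) :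
    conjU hM 1 = 1 := by
  rw [conjU, show Matrix.diagonal (1 : Fin d → ℝ) = 1 from Matrix.diagonal_one, mul_one]
  exact Unitary.coe_mul_star_self hM.eigenvectorUnitary

lemma conjU_pow {M : Matrix (Fin d) (Fin d) ℝ} (hM : M.IsHermitian) (v : Fin d → ℝ) (n : ℕ) :
    conjU hM v ^ n = conjU hM (v ^ n) := by
  induction n with
  | zero => simp [pow_zero, conjU_one hM]
  | succ n ih => rw [pow_succ, ih, conjU_mul hM, ← pow_succ]

lemma self_eq_conjU {M : Matrix (Fin d) (Fin d) ℝ} (hM : M.IsHermitian) :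
    M = conjU hM hM.eigenvalues := by
  conv_lhs => rw [hM.spectral_theorem]
  congr 1

lemma matFun_mul {f g : ℝ → ℝ} {M : Matrix (Fin d) (Fin d) ℝ} (hM : M.IsHermitian) :
    matFun f M * matFun g M = matFun (f * g) M := by
  simp only [matFun_of_isHermitian hM, conjU_mul hM]; rfl

lemma matFun_sub (f g : ℝ → ℝ) {M : Matrix (Fin d) (Fin d) ℝ} (hM : M.IsHermitian) :
    matFun f M - matFun g M = matFun (f - g) M := by
  simp only [matFun_of_isHermitian hM, conjU_sub hM]; rfl

lemma matFun_poly (p : ℝ[X]) {M : Matrix (Fin d) (Fin d) ℝ} (hM : M.IsHermitian) :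
    matFun (fun x => p.eval x) M = Polynomial.aeval M p := by
  induction p using Polynomial.induction_on' with
  | add p q hp hq =>
      rw [map_add, ← hp, ← hq, matFun_of_isHermitian hM, matFun_of_isHermitian hM,
        matFun_of_isHermitian hM, conjU_add hM]
      exact congrArg (conjU hM) (funext fun i => by simp)
  | monomial n a =>
      have hMn : M ^ n = conjU hM (hM.eigenvalues ^ n) := by
        conv_lhs => rw [self_eq_conjU hM]
        rw [conjU_pow hM]
      rw [aeval_monomial, ← Algebra.smul_def, hMn, conjU_smul hM,
        matFun_of_isHermitian hM]
      exact congrArg (conjU hM) (funext fun i => by simp [eval_monomial])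

/-! ### Bounds -/

lemma isHermitian_conjU {M : Matrix (Fin d) (Fin d) ℝ} (hM : M.IsHermitian) (v : Fin d → ℝ) :
    (conjU hM v).IsHermitian := by
  have hD : star (Matrix.diagonal v) = Matrix.diagonal v := by
    rw [Matrix.star_eq_conjTranspose, Matrix.diagonal_conjTranspose]
    congr
  show (conjU hM v)ᴴ = conjU hM v
  rw [← Matrix.star_eq_conjTranspose, conjU, StarMul.star_mul, StarMul.star_mul, star_star, hD, mul_assoc]

lemma sum_sq_conjU {M : Matrix (Fin d) (Fin d) ℝ} (hM : M.IsHermitian) (v : Fin d → ℝ) :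
    ∑ i, ∑ j, (conjU hM v i j) ^ 2 = ∑ i, (v i) ^ 2 := by
  have hsym : ∀ i j, conjU hM v j i = conjU hM v i j := by
    intro i j
    have := congrFun (congrFun (isHermitian_conjU hM v) i) j
    simpa [Matrix.conjTranspose_apply] using this
  have h1 : (conjU hM v * conjU hM v).trace = ∑ i, (v i) ^ 2 := by
    rw [conjU_mul hM, trace_conjU]
    simp [sq]
  rw [← h1, Matrix.trace]
  apply Finset.sum_congr rfl
  intro i _
  rw [Matrix.diag, Matrix.mul_apply]
  apply Finset.sum_congr rfl
  intro j _
  rw [hsym i j, sq]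

lemma sq_trace_mul_le (X Y : Matrix (Fin d) (Fin d) ℝ) :
    ((X * Y).trace) ^ 2 ≤ (∑ i, ∑ j, (X i j)^2) * (∑ i, ∑ j, (Y i j)^2) := by
  have h : (X * Y).trace = ∑ p : Fin d × Fin d, X p.1 p.2 * Y p.2 p.1 := by
    rw [Fintype.sum_prod_type]
    simp [Matrix.trace, Matrix.diag, Matrix.mul_apply]
  have hX : (∑ i, ∑ j, (X i j)^2) = ∑ p : Fin d × Fin d, (X p.1 p.2)^2 := by
    rw [Fintype.sum_prod_type]
  have hY : (∑ i, ∑ j, (Y i j)^2) = ∑ p : Fin d × Fin d, (Y p.2 p.1)^2 := by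
    rw [show (∑ p : Fin d × Fin d, (Y p.2 p.1)^2) = ∑ p : Fin d × Fin d, (Y p.1 p.2)^2 from
      Fintype.sum_equiv (Equiv.prodComm _ _) _ _ (fun p => rfl)]
    rw [Fintype.sum_prod_type]
  rw [h, hX, hY]
  exact Finset.sum_mul_sq_le_sq_mul_sq _ _ _

/-- eigenvalues are bounded by the Frobenius norm -/
lemma eigenvalue_sq_le {M : Matrix (Fin d) (Fin d) ℝ} (hM : M.IsHermitian) (i : Fin d) :
    (hM.eigenvalues i) ^ 2 ≤ ∑ j, ∑ k, (M j k) ^ 2 := by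
  have h : ∑ j, ∑ k, (M j k) ^ 2 = ∑ i, (hM.eigenvalues i) ^ 2 := by
    have := sum_sq_conjU hM hM.eigenvalues
    conv_lhs => rw [self_eq_conjU hM]
    exact this
  rw [h]
  exact Finset.single_le_sum (f := fun i => (hM.eigenvalues i)^2)
    (fun j _ => sq_nonneg _) (Finset.mem_univ i)

/-- key bound for uniform convergence -/
lemma abs_trace_matFun_mul_le {M : Matrix (Fin d) (Fin d) ℝ} (hM : M.IsHermitian)
    (h : ℝ → ℝ) (Y : Matrix (Fin d) (Fin d) ℝ) (ε : ℝ) (hε : 0 ≤ ε)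
    (hb : ∀ i, |h (hM.eigenvalues i)| ≤ ε) :
    |(matFun h M * Y).trace| ≤ ε * (Real.sqrt d * Real.sqrt (∑ i, ∑ j, (Y i j)^2)) := by
  have h1 : ((matFun h M * Y).trace)^2 ≤ (∑ i, (h (hM.eigenvalues i))^2) * (∑ i, ∑ j, (Y i j)^2) := by
    rw [matFun_of_isHermitian hM]
    have := sq_trace_mul_le (conjU hM fun i => h (hM.eigenvalues i)) Y
    rwa [sum_sq_conjU hM] at this
  have h2 : (∑ i, (h (hM.eigenvalues i))^2) ≤ d * ε^2 := by
    calc (∑ i, (h (hM.eigenvalues i))^2) ≤ ∑ _i : Fin d, ε^2 := by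
          apply Finset.sum_le_sum
          intro i _
          rw [← sq_abs]
          exact pow_le_pow_left₀ (abs_nonneg _) (hb i) 2
      _ = d * ε^2 := by simp [mul_comm]
  have h3 : ((matFun h M * Y).trace)^2 ≤ (d * ε^2) * (∑ i, ∑ j, (Y i j)^2) :=
    h1.trans (mul_le_mul_of_nonneg_right h2 (Finset.sum_nonneg fun i _ =>
      Finset.sum_nonneg fun j _ => sq_nonneg _))
  have h4 : |(matFun h M * Y).trace| = Real.sqrt (((matFun h M * Y).trace)^2) :=
    (Real.sqrt_sq_eq_abs _).symm
  rw [h4]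
  calc Real.sqrt (((matFun h M * Y).trace)^2)
      ≤ Real.sqrt ((d * ε^2) * (∑ i, ∑ j, (Y i j)^2)) := Real.sqrt_le_sqrt h3
    _ = ε * (Real.sqrt d * Real.sqrt (∑ i, ∑ j, (Y i j)^2)) := by
        rw [Real.sqrt_mul (by positivity), Real.sqrt_mul (by positivity), Real.sqrt_sq hε]
        ring

/-! ### Derivative of polynomial trace -/

section Calc

attribute [local instance] Matrix.linftyOpNormedAddCommGroup Matrix.linftyOpNormedSpace
  Matrix.linftyOpNormedRing Matrix.linftyOpNormedAlgebra

variable (A H : Matrix (Fin d) (Fin d) ℝ)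

lemma hasDerivAt_affine (t₀ : ℝ) : HasDerivAt (fun t : ℝ => A + t • H) H t₀ := by
  have h1 : HasDerivAt (fun t : ℝ => t • H) ((1:ℝ) • H) t₀ := (hasDerivAt_id t₀).smul_const H
  have h2 := h1.const_add A
  rwa [one_smul] at h2

lemma hasDerivAt_matpow (t₀ : ℝ) (n : ℕ) :
    HasDerivAt (fun t : ℝ => (A + t • H) ^ n)
      (∑ k ∈ Finset.range n, (A + t₀ • H) ^ k * H * (A + t₀ • H) ^ (n - 1 - k)) t₀ := by
  induction n with
  | zero =>
    simp only [pow_zero, Finset.sum_range_zero]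
    exact hasDerivAt_const t₀ (1 : Matrix (Fin d) (Fin d) ℝ)
  | succ n ih =>
      have h := ih.mul (hasDerivAt_affine A H t₀)
      have heq : (∑ k ∈ Finset.range n, (A + t₀ • H) ^ k * H * (A + t₀ • H) ^ (n - 1 - k)) *
            (A + t₀ • H) + (A + t₀ • H) ^ n * H
          = ∑ k ∈ Finset.range (n+1), (A + t₀ • H) ^ k * H * (A + t₀ • H) ^ (n - k) := by
        rw [Finset.sum_range_succ, Finset.sum_mul]
        congr 1
        · apply Finset.sum_congr rfl
          intro k hk
          rw [Finset.mem_range] at hk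
          rw [mul_assoc ((A + t₀ • H) ^ k * H), ← pow_succ]
          congr 2
          omega
        · rw [Nat.sub_self, pow_zero, mul_one]
      have h2 : HasDerivAt (fun t : ℝ => (A + t • H) ^ n * (A + t • H))
          (∑ k ∈ Finset.range (n+1), (A + t₀ • H) ^ k * H * (A + t₀ • H) ^ (n - k)) t₀ := by
        rw [← heq]; exact h
      have h3 : (fun t : ℝ => (A + t • H) ^ (n+1)) = fun t : ℝ => (A + t • H) ^ n * (A + t • H) := by
        funext t; rw [pow_succ]
      rw [h3]
      have hexp : ∀ k, n + 1 - 1 - k = n - k := fun k => by omega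
      simpa only [hexp] using h2

lemma hasDerivAt_trace_aeval (p : Polynomial ℝ) (t₀ : ℝ) :
    HasDerivAt (fun t : ℝ => (Polynomial.aeval (A + t • H) p).trace)
      ((Polynomial.aeval (A + t₀ • H) (Polynomial.derivative p) * H).trace) t₀ := by
  induction p using Polynomial.induction_on' with
  | add p q hp hq =>
      simp only [map_add, Matrix.add_mul, Matrix.trace_add]
      exact hp.add hq
  | monomial n a =>
      set B := A + t₀ • H with hB
      set tCLM : Matrix (Fin d) (Fin d) ℝ →L[ℝ] ℝ :=
        LinearMap.toContinuousLinearMap (Matrix.traceLinearMap (Fin d) ℝ ℝ) with htCLM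
      have happ : ∀ X : Matrix (Fin d) (Fin d) ℝ, tCLM X = X.trace := fun X => rfl
      have htr : HasDerivAt (fun t : ℝ => tCLM ((A + t • H) ^ n))
          (tCLM (∑ k ∈ Finset.range n, B ^ k * H * B ^ (n - 1 - k))) t₀ :=
        tCLM.hasFDerivAt.comp_hasDerivAt t₀ (hasDerivAt_matpow A H t₀ n)
      have hsum : tCLM (∑ k ∈ Finset.range n, B ^ k * H * B ^ (n - 1 - k))
          = (n : ℝ) * (B ^ (n - 1) * H).trace := by
        rw [happ, Matrix.trace_sum]
        have hterm : ∀ k ∈ Finset.range n,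
            (B ^ k * H * B ^ (n - 1 - k)).trace = (B ^ (n - 1) * H).trace := by
          intro k hk
          rw [Finset.mem_range] at hk
          rw [Matrix.trace_mul_cycle, ← pow_add]
          congr 3
          omega
        rw [Finset.sum_congr rfl hterm, Finset.sum_const, Finset.card_range, nsmul_eq_mul]
      have hfun : (fun t : ℝ => (Polynomial.aeval (A + t • H) (Polynomial.monomial n a)).trace)
          = fun t : ℝ => a * tCLM ((A + t • H) ^ n) := by
        funext t
        rw [Polynomial.aeval_monomial, ← Algebra.smul_def, happ, Matrix.trace_smul, smul_eq_mul]
      have hval : (Polynomial.aeval B (Polynomial.derivative (Polynomial.monomial n a)) * H).trace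
          = a * tCLM (∑ k ∈ Finset.range n, B ^ k * H * B ^ (n - 1 - k)) := by
        rw [hsum, Polynomial.derivative_monomial, Polynomial.aeval_monomial, ← Algebra.smul_def,
          Matrix.smul_mul, Matrix.trace_smul, smul_eq_mul]
        ring
      rw [hfun, hval]
      exact htr.const_mul a

end Calc

/-! ### Antiderivative of a polynomial and an MVT bound -/

lemma exists_antideriv (q : Polynomial ℝ) (c : ℝ) :
    ∃ P : Polynomial ℝ, Polynomial.derivative P = q ∧ P.eval 0 = c := by
  classical
  refine ⟨Polynomial.C c + ∑ n ∈ q.support,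
    Polynomial.C (q.coeff n / (n + 1)) * Polynomial.X ^ (n + 1), ?_, ?_⟩
  · rw [map_add, map_sum, Polynomial.derivative_C, zero_add]
    have hterm : ∀ n ∈ q.support,
        Polynomial.derivative (Polynomial.C (q.coeff n / (n + 1)) * Polynomial.X ^ (n + 1))
          = Polynomial.C (q.coeff n) * Polynomial.X ^ n := by
      intro n _
      rw [Polynomial.derivative_C_mul_X_pow]
      congr 2
      · push_cast
        rw [div_mul_cancel₀]
        positivity
    rw [Finset.sum_congr rfl hterm]
    have := Polynomial.sum_C_mul_X_pow_eq q
    rwa [Polynomial.sum] at this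
  · rw [Polynomial.eval_add, Polynomial.eval_C, Polynomial.eval_finset_sum]
    have : ∀ n ∈ q.support,
        Polynomial.eval 0 (Polynomial.C (q.coeff n / (n + 1)) * Polynomial.X ^ (n + 1)) = 0 := by
      intro n _
      simp
    rw [Finset.sum_congr rfl this, Finset.sum_const, smul_zero, add_zero]

lemma abs_eval_sub_le {f : ℝ → ℝ} (hf : ContDiff ℝ 1 f) (P : Polynomial ℝ) (R ε : ℝ)
    (hR : 0 ≤ R) (h0 : P.eval 0 = f 0)
    (hd : ∀ x ∈ Set.Icc (-R) R, |(Polynomial.derivative P).eval x - deriv f x| ≤ ε) :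
    ∀ x ∈ Set.Icc (-R) R, |P.eval x - f x| ≤ ε * R := by
  intro x hx
  have hg : ∀ y ∈ Set.Icc (-R) R, HasDerivWithinAt (fun y => P.eval y - f y)
      ((Polynomial.derivative P).eval y - deriv f y) (Set.Icc (-R) R) y := by
    intro y _
    exact ((P.hasDerivAt y).sub
      ((hf.differentiable one_ne_zero).differentiableAt.hasDerivAt)).hasDerivWithinAt
  have h0' : (0:ℝ) ∈ Set.Icc (-R) R := by constructor <;> linarith
  have := Convex.norm_image_sub_le_of_norm_hasDerivWithin_le hg
    (fun y hy => by simpa [Real.norm_eq_abs] using hd y hy) (convex_Icc _ _) h0' hx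
  rw [h0, sub_self, sub_zero, Real.norm_eq_abs, Real.norm_eq_abs, sub_zero] at this
  calc |P.eval x - f x| ≤ ε * |x| := this
    _ ≤ ε * R := by
        have hε : 0 ≤ ε := le_trans (abs_nonneg _) (hd 0 h0')
        have hxR : |x| ≤ R := abs_le.mpr ⟨hx.1, hx.2⟩
        exact mul_le_mul_of_nonneg_left hxR hε

lemma isHermitian_smul_real {H : Matrix (Fin d) (Fin d) ℝ} (hH : H.IsHermitian) (t : ℝ) :
    (t • H).IsHermitian := by
  show (t • H)ᴴ = t • H
  rw [Matrix.conjTranspose_smul, hH.eq]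
  simp

/-- For self-adjoint `A, H` on a finite-dimensional Hilbert space and
continuously differentiable `f : ℝ → ℝ`, the derivative at `t = 0` of
`t ↦ tr f(A + tH)` equals `tr (f'(A) H)`. -/
theorem hasDerivAt_trace_matFun {d : ℕ} (A H : Matrix (Fin d) (Fin d) ℝ)
    (hA : A.IsHermitian) (hH : H.IsHermitian) (f : ℝ → ℝ) (hf : ContDiff ℝ 1 f) :
    HasDerivAt (fun t : ℝ => (matFun f (A + t • H)).trace)
      ((matFun (deriv f) A * H).trace) 0 := by
  classical
  have hMt : ∀ t : ℝ, (A + t • H).IsHermitian := fun t => hA.add (isHermitian_smul_real hH t)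
  set R : ℝ := Real.sqrt (∑ j, ∑ k, (|A j k| + |H j k|)^2) with hRdef
  have hRnn : 0 ≤ R := Real.sqrt_nonneg _
  -- eigenvalues of A + t • H lie in [-R, R] for |t| < 1
  have heig : ∀ t ∈ Set.Ioo (-1:ℝ) 1, ∀ i, (hMt t).eigenvalues i ∈ Set.Icc (-R) R := by
    intro t ht i
    have h1 := eigenvalue_sq_le (hMt t) i
    have h2 : ∑ j, ∑ k, ((A + t • H) j k)^2 ≤ ∑ j, ∑ k, (|A j k| + |H j k|)^2 := by
      refine Finset.sum_le_sum fun j _ => Finset.sum_le_sum fun k _ => ?_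
      have ht1 : |t| ≤ 1 := by
        rw [abs_le]; exact ⟨ht.1.le, ht.2.le⟩
      have habs : |(A + t • H) j k| ≤ |A j k| + |H j k| := by
        rw [Matrix.add_apply, Matrix.smul_apply, smul_eq_mul]
        calc |A j k + t * H j k| ≤ |A j k| + |t * H j k| := abs_add_le _ _
          _ ≤ |A j k| + |H j k| := by
              rw [abs_mul]
              nlinarith [abs_nonneg (H j k), abs_nonneg t]
      rw [← sq_abs]
      exact pow_le_pow_left₀ (abs_nonneg _) habs 2
    have hsq : ((hMt t).eigenvalues i)^2 ≤ R^2 := by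
      rw [hRdef, Real.sq_sqrt (by positivity)]
      exact h1.trans h2
    have := Real.sqrt_le_sqrt hsq
    rw [Real.sqrt_sq_eq_abs, Real.sqrt_sq hRnn] at this
    exact Set.mem_Icc.mpr (abs_le.mp this)
  have hcd : Continuous (deriv f) := hf.continuous_deriv le_rfl
  -- choose approximating polynomials
  have hex : ∀ n : ℕ, ∃ P : Polynomial ℝ,
      (∀ x ∈ Set.Icc (-R) R, |(Polynomial.derivative P).eval x - deriv f x| ≤ 1/(n+1)) ∧
      P.eval 0 = f 0 := by
    intro n
    obtain ⟨q, hq⟩ := exists_polynomial_near_of_continuousOn (-R) R (deriv f)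
      hcd.continuousOn (1/(n+1)) (by positivity)
    obtain ⟨P, hPd, hP0⟩ := exists_antideriv q (f 0)
    exact ⟨P, fun x hx => by rw [hPd]; exact (hq x hx).le, hP0⟩
  choose P hPd hP0 using hex
  set Fn : ℕ → ℝ → ℝ := fun n t => (Polynomial.aeval (A + t • H) (P n)).trace with hFn
  set Fn' : ℕ → ℝ → ℝ :=
    fun n t => ((Polynomial.aeval (A + t • H) (Polynomial.derivative (P n))) * H).trace with hFn'
  set g' : ℝ → ℝ := fun t => ((matFun (deriv f) (A + t • H)) * H).trace with hg'
  set CH : ℝ := Real.sqrt d * Real.sqrt (∑ i, ∑ j, (H i j)^2) with hCH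
  have hCHnn : 0 ≤ CH := by positivity
  -- each Fn has derivative Fn'
  have hderiv : ∀ n : ℕ, ∀ t : ℝ, t ∈ Set.Ioo (-1:ℝ) 1 → HasDerivAt (Fn n) (Fn' n t) t :=
    fun n t _ => hasDerivAt_trace_aeval A H (P n) t
  -- uniform convergence of the derivatives
  have hunif : TendstoUniformlyOn Fn' g' Filter.atTop (Set.Ioo (-1:ℝ) 1) := by
    rw [Metric.tendstoUniformlyOn_iff]
    intro ε hε
    have htend : Filter.Tendsto (fun n : ℕ => (1/(n+1) : ℝ) * CH) Filter.atTop (nhds 0) := by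
      simpa using tendsto_one_div_add_atTop_nhds_zero_nat.mul_const CH
    filter_upwards [htend.eventually (gt_mem_nhds hε)] with n hn t ht
    rw [Real.dist_eq]
    have key : g' t - Fn' n t
        = ((matFun (deriv f - fun x => (Polynomial.derivative (P n)).eval x) (A + t • H)) * H).trace := by
      rw [hg', hFn']
      dsimp only
      rw [← matFun_poly _ (hMt t), ← matFun_sub _ _ (hMt t), Matrix.sub_mul, Matrix.trace_sub]
    have hb : ∀ i, |(deriv f - fun x => (Polynomial.derivative (P n)).eval x)
        ((hMt t).eigenvalues i)| ≤ 1/(n+1) := by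
      intro i
      have := hPd n ((hMt t).eigenvalues i) (heig t ht i)
      rw [Pi.sub_apply]
      rw [abs_sub_comm]
      exact this
    have hbound := abs_trace_matFun_mul_le (hMt t)
      (deriv f - fun x => (Polynomial.derivative (P n)).eval x) H (1/(n+1)) (by positivity) hb
    calc |g' t - Fn' n t| ≤ (1/(n+1)) * CH := by rw [key]; exact hbound
      _ < ε := hn
  -- pointwise convergence
  have hpt : ∀ t : ℝ, t ∈ Set.Ioo (-1:ℝ) 1 →
      Filter.Tendsto (fun n => Fn n t) Filter.atTop
        (nhds ((matFun f (A + t • H)).trace)) := by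
    intro t ht
    rw [← tendsto_sub_nhds_zero_iff]
    apply squeeze_zero_norm (a := fun n : ℕ => d * (1/(n+1) * R))
    · intro n
      have hFval : Fn n t = ∑ i, (P n).eval ((hMt t).eigenvalues i) := by
        rw [hFn]
        dsimp only
        rw [← matFun_poly _ (hMt t), trace_matFun_s4 (hMt t)]
      have hgval : (matFun f (A + t • H)).trace = ∑ i, f ((hMt t).eigenvalues i) :=
        trace_matFun_s4 (hMt t)
      rw [Real.norm_eq_abs, hFval, hgval, ← Finset.sum_sub_distrib]
      calc |∑ i, ((P n).eval ((hMt t).eigenvalues i) - f ((hMt t).eigenvalues i))|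
          ≤ ∑ i, |(P n).eval ((hMt t).eigenvalues i) - f ((hMt t).eigenvalues i)| :=
            Finset.abs_sum_le_sum_abs _ _
        _ ≤ ∑ _i : Fin d, (1/(n+1) * R) := by
            refine Finset.sum_le_sum fun i _ => ?_
            exact abs_eval_sub_le hf (P n) R (1/(n+1)) hRnn (hP0 n) (hPd n)
              ((hMt t).eigenvalues i) (heig t ht i)
        _ = d * (1/(n+1) * R) := by simp [mul_comm]
    · have : Filter.Tendsto (fun n : ℕ => (1/(n+1) : ℝ)) Filter.atTop (nhds 0) :=
        tendsto_one_div_add_atTop_nhds_zero_nat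
      simpa using (this.mul_const R).const_mul (d : ℝ)
  have h0 : (0:ℝ) ∈ Set.Ioo (-1:ℝ) 1 := by norm_num
  have hmain := hasDerivAt_of_tendstoUniformlyOn isOpen_Ioo hunif
    (Filter.Eventually.of_forall hderiv) hpt h0
  have : g' 0 = (matFun (deriv f) A * H).trace := by
    rw [hg']
    simp
  rwa [this] at hmain
end

section
/- Let X_1,...,X_n be i.i.d. centered Gaussian vectors with covariance Σ in ℝ^d and sample covariance Σ̂_n. Then E ‖Σ̂_n − Σ‖₂² ≤ E‖X‖⁴ / n, and consequently E^{1/2} ‖Σ̂_n − Σ‖₂² ≤ C ‖Σ‖ · r(Σ)/√n for a universal constant C, where r(Σ) = tr(Σ)/‖Σ‖ is the effective rank. -/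
open MeasureTheory ProbabilityTheory Matrix

/-- The standard Gaussian measure on `ℝ^d`. -/
noncomputable def stdGaussian (d : ℕ) : Measure (Fin d → ℝ) :=
  Measure.pi fun _ => gaussianReal 0 1

/-- The square root of a positive semidefinite matrix (Mathlib's former `Matrix.PosSemidef.sqrt`). -/
noncomputable def Matrix.PosSemidef.sqrt {n : Type*} [Fintype n] [DecidableEq n]
    {A : Matrix n n ℝ} (hA : A.PosSemidef) : Matrix n n ℝ :=
  hA.1.eigenvectorUnitary.1 * diagonal ((↑) ∘ (fun x : ℝ => Real.sqrt x) ∘ hA.1.eigenvalues) *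
    (star hA.1.eigenvectorUnitary : Matrix n n ℝ)

/-- The centered Gaussian measure `N(0, S)` on `ℝ^d`, realized as the image of the standard
Gaussian under `z ↦ S^{1/2} z`. -/
noncomputable def gaussianVec {d : ℕ} (S : Matrix (Fin d) (Fin d) ℝ) (hS : S.PosSemidef) :
    Measure (Fin d → ℝ) :=
  Measure.map (fun z => hS.sqrt.mulVec z) (stdGaussian d)

/-- The (ℓ²→ℓ²) operator norm of a real matrix. -/
noncomputable def matOpNorm {d : ℕ} (M : Matrix (Fin d) (Fin d) ℝ) : ℝ :=
  ‖Matrix.toEuclideanCLM (𝕜 := ℝ) M‖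

/-- The effective rank `r(S) = tr(S)/‖S‖`. -/
noncomputable def effRank {d : ℕ} (S : Matrix (Fin d) (Fin d) ℝ) : ℝ :=
  S.trace / matOpNorm S

/-- The Euclidean norm of a vector in `ℝ^d`. -/
noncomputable def vecNorm {d : ℕ} (x : Fin d → ℝ) : ℝ :=
  Real.sqrt (∑ j, (x j) ^ 2)

/-- The sample covariance matrix `n⁻¹ ∑_i X_i X_iᵀ`. -/
noncomputable def sampleCov {d n : ℕ} (X : Fin n → Fin d → ℝ) : Matrix (Fin d) (Fin d) ℝ :=
  (n : ℝ)⁻¹ • ∑ i, Matrix.vecMulVec (X i) (X i)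



open Real Filter Topology
open scoped NNReal ENNReal

section GaussMoments


lemma integrable_pow_mul_gauss (k : ℕ) :
    Integrable (fun x : ℝ => x ^ k * Real.exp (-(1/2) * x ^ 2)) := by
  have hC : (0:ℝ) ≤ 4 ^ k * (k.factorial : ℝ) := by positivity
  apply Integrable.mono'
    (g := fun x : ℝ => Real.exp (-(1/2) * x ^ 2)
      + (4 ^ k * (k.factorial : ℝ)) * Real.exp (-(1/4) * x ^ 2))
  · exact (integrable_exp_neg_mul_sq (by norm_num : (0:ℝ) < 1/2)).add
      ((integrable_exp_neg_mul_sq (by norm_num : (0:ℝ) < 1/4)).const_mul _)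
  · exact (measurable_id.pow_const k).mul
      (((measurable_id.pow_const 2).const_mul _).exp) |>.aestronglyMeasurable
  · refine ae_of_all _ fun x => ?_
    have h1 : ‖x ^ k * Real.exp (-(1/2) * x ^ 2)‖ = |x| ^ k * Real.exp (-(1/2) * x ^ 2) := by
      rw [norm_mul, Real.norm_eq_abs, Real.norm_eq_abs, abs_pow,
        abs_of_pos (Real.exp_pos _)]
    rw [h1]
    have habs : |x| ^ k ≤ 1 + (x ^ 2) ^ k := by
      rcases le_total (|x|) 1 with h | h
      · have := pow_le_one₀ (n := k) (abs_nonneg x) h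
        linarith [pow_nonneg (sq_nonneg x) k]
      · have h2 : |x| ^ k ≤ |x| ^ (2 * k) :=
          pow_le_pow_right₀ h (by omega)
        have h3 : |x| ^ (2 * k) = (x ^ 2) ^ k := by
          rw [pow_mul, sq_abs]
        nlinarith [pow_nonneg (abs_nonneg x) k]
    have hpow : (x ^ 2) ^ k ≤ 4 ^ k * (k.factorial : ℝ) * Real.exp ((1/4) * x ^ 2) := by
      have hsum := Real.sum_le_exp_of_nonneg (x := (1/4) * x ^ 2) (by positivity) (k + 1)
      have hterm : ((1/4) * x ^ 2) ^ k / (k.factorial : ℝ) ≤ Real.exp ((1/4) * x ^ 2) := by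
        refine le_trans ?_ hsum
        exact Finset.single_le_sum (f := fun i => ((1/4) * x^2)^i / (i.factorial : ℝ))
          (fun i _ => by positivity) (Finset.self_mem_range_succ k)
      have hfac : (0:ℝ) < (k.factorial : ℝ) := by positivity
      rw [div_le_iff₀ hfac] at hterm
      have h4 : (x ^ 2) ^ k = 4 ^ k * ((1/4) * x ^ 2) ^ k := by
        rw [mul_pow, ← mul_assoc, ← mul_pow]; norm_num
      rw [h4]
      calc 4 ^ k * ((1/4) * x ^ 2) ^ k
          ≤ 4 ^ k * (Real.exp ((1/4) * x ^ 2) * (k.factorial : ℝ)) := by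
            gcongr
        _ = 4 ^ k * (k.factorial : ℝ) * Real.exp ((1/4) * x ^ 2) := by ring
    have hkey : (x ^ 2) ^ k * Real.exp (-(1/2) * x ^ 2)
        ≤ 4 ^ k * (k.factorial : ℝ) * Real.exp (-(1/4) * x ^ 2) := by
      have h5 : Real.exp ((1/4) * x ^ 2) * Real.exp (-(1/2) * x ^ 2)
          = Real.exp (-(1/4) * x ^ 2) := by
        rw [← Real.exp_add]; ring_nf
      calc (x ^ 2) ^ k * Real.exp (-(1/2) * x ^ 2)
          ≤ 4 ^ k * (k.factorial : ℝ) * Real.exp ((1/4) * x ^ 2)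
            * Real.exp (-(1/2) * x ^ 2) :=
            mul_le_mul_of_nonneg_right hpow (Real.exp_pos _).le
        _ = 4 ^ k * (k.factorial : ℝ)
            * (Real.exp ((1/4) * x ^ 2) * Real.exp (-(1/2) * x ^ 2)) := by ring
        _ = 4 ^ k * (k.factorial : ℝ) * Real.exp (-(1/4) * x ^ 2) := by rw [h5]
    calc |x| ^ k * Real.exp (-(1/2) * x ^ 2)
        ≤ (1 + (x ^ 2) ^ k) * Real.exp (-(1/2) * x ^ 2) := by gcongr
      _ = Real.exp (-(1/2) * x ^ 2) + (x ^ 2) ^ k * Real.exp (-(1/2) * x ^ 2) := by ring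
      _ ≤ Real.exp (-(1/2) * x ^ 2)
          + 4 ^ k * (k.factorial : ℝ) * Real.exp (-(1/4) * x ^ 2) := by linarith

lemma tendsto_pow_mul_gauss_atTop (m : ℕ) :
    Tendsto (fun x : ℝ => x ^ m * Real.exp (-(1/2) * x ^ 2)) atTop (𝓝 0) := by
  have h2 : Tendsto (fun x : ℝ => x ^ 2 / 2) atTop atTop := by
    apply Filter.Tendsto.atTop_div_const (by norm_num)
    exact tendsto_pow_atTop (by norm_num)
  have key : Tendsto (fun x : ℝ => (x ^ 2 / 2) ^ m * Real.exp (-(x ^ 2 / 2))) atTop (𝓝 0) := by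
    have := (tendsto_pow_mul_exp_neg_atTop_nhds_zero m).comp h2
    simpa [Function.comp_def] using this
  apply squeeze_zero' (g := fun x : ℝ => (x ^ 2 / 2) ^ m * Real.exp (-(x ^ 2 / 2)))
  · filter_upwards [eventually_ge_atTop (0:ℝ)] with x hx
    positivity
  · filter_upwards [eventually_ge_atTop (2:ℝ)] with x hx
    have hxx : x ≤ x ^ 2 / 2 := by nlinarith
    have hle : x ^ m ≤ (x ^ 2 / 2) ^ m := pow_le_pow_left₀ (by linarith) hxx m
    have he : -(1/2 : ℝ) * x ^ 2 = -(x ^ 2 / 2) := by ring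
    rw [he]
    gcongr
  · exact key
lemma tendsto_pow_mul_gauss_atBot (m : ℕ) :
    Tendsto (fun x : ℝ => x ^ m * Real.exp (-(1/2) * x ^ 2)) atBot (𝓝 0) := by
  have h := ((tendsto_pow_mul_gauss_atTop m).comp tendsto_neg_atBot_atTop).const_mul ((-1:ℝ)^m)
  rw [mul_zero] at h
  refine h.congr fun x => ?_
  simp only [Function.comp]
  have : ((-1:ℝ))^m * (-x)^m = x^m := by
    rw [← mul_pow]; ring_nf
  calc ((-1:ℝ))^m * ((-x)^m * Real.exp (-(1/2) * (-x)^2))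
      = ((-1:ℝ)^m * (-x)^m) * Real.exp (-(1/2) * x^2) := by ring_nf
    _ = x^m * Real.exp (-(1/2) * x^2) := by rw [this]

lemma gauss_G0 : ∫ x : ℝ, Real.exp (-(1/2) * x ^ 2) = √(2 * π) := by
  rw [show (fun x : ℝ => Real.exp (-(1/2) * x ^ 2)) = fun x : ℝ => Real.exp (-(1/2 : ℝ) * x ^ 2) from rfl,
    integral_gaussian]
  norm_num [mul_comm]

lemma gauss_G1 : ∫ x : ℝ, x * Real.exp (-(1/2) * x ^ 2) = 0 := by
  have hderiv : ∀ x : ℝ, HasDerivAt (fun y : ℝ => -Real.exp (-(1/2) * y ^ 2))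
      (x * Real.exp (-(1/2) * x ^ 2)) x := by
    intro x
    have h1 : HasDerivAt (fun y : ℝ => -(1/2) * y ^ 2) (-(1/2) * (2 * x ^ 1)) x :=
      (hasDerivAt_pow 2 x).const_mul _
    have h2 := (h1.exp).neg
    refine h2.congr_deriv ?_
    ring_nf
  have h0 : Tendsto (fun y : ℝ => -Real.exp (-(1/2) * y ^ 2)) atTop (𝓝 0) := by
    have := (tendsto_pow_mul_gauss_atTop 0).neg
    simpa using this
  have h0' : Tendsto (fun y : ℝ => -Real.exp (-(1/2) * y ^ 2)) atBot (𝓝 0) := by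
    have := (tendsto_pow_mul_gauss_atBot 0).neg
    simpa using this
  have := integral_of_hasDerivAt_of_tendsto hderiv
    (by simpa using integrable_pow_mul_gauss 1) h0' h0
  simpa using this

lemma gauss_rec (k : ℕ) :
    ∫ x : ℝ, x ^ (k+2) * Real.exp (-(1/2) * x ^ 2)
      = (k+1 : ℝ) * ∫ x : ℝ, x ^ k * Real.exp (-(1/2) * x ^ 2) := by
  set f' : ℝ → ℝ := fun x => x ^ (k+2) * Real.exp (-(1/2) * x ^ 2)
    - (k+1 : ℝ) * (x ^ k * Real.exp (-(1/2) * x ^ 2)) with hf'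
  have hderiv : ∀ x : ℝ, HasDerivAt (fun y : ℝ => -(y ^ (k+1) * Real.exp (-(1/2) * y ^ 2)))
      (f' x) x := by
    intro x
    have h1 : HasDerivAt (fun y : ℝ => -(1/2) * y ^ 2) (-(1/2) * (2 * x ^ 1)) x :=
      (hasDerivAt_pow 2 x).const_mul _
    have h2 := ((hasDerivAt_pow (k+1) x).mul h1.exp).neg
    refine h2.congr_deriv ?_
    simp only [hf', Nat.add_sub_cancel]
    push_cast
    ring_nf
  have hint : Integrable f' :=
    (integrable_pow_mul_gauss (k+2)).sub ((integrable_pow_mul_gauss k).const_mul _)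
  have htop : Tendsto (fun y : ℝ => -(y ^ (k+1) * Real.exp (-(1/2) * y ^ 2))) atTop (𝓝 0) := by
    simpa using (tendsto_pow_mul_gauss_atTop (k+1)).neg
  have hbot : Tendsto (fun y : ℝ => -(y ^ (k+1) * Real.exp (-(1/2) * y ^ 2))) atBot (𝓝 0) := by
    simpa using (tendsto_pow_mul_gauss_atBot (k+1)).neg
  have h := integral_of_hasDerivAt_of_tendsto hderiv hint hbot htop
  rw [sub_zero] at h
  have hsplit : ∫ x, f' x
      = (∫ x : ℝ, x ^ (k+2) * Real.exp (-(1/2) * x ^ 2))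
        - (k+1 : ℝ) * ∫ x : ℝ, x ^ k * Real.exp (-(1/2) * x ^ 2) := by
    rw [integral_sub (integrable_pow_mul_gauss (k+2))
      ((integrable_pow_mul_gauss k).const_mul _), integral_const_mul]
  rw [h] at hsplit
  linarith

lemma gaussianReal_std_density :
    (gaussianReal 0 1 : Measure ℝ)
      = volume.withDensity
          (fun x => ((((√(2 * π))⁻¹ * Real.exp (-(1/2) * x ^ 2)).toNNReal : ℝ≥0) : ℝ≥0∞)) := by
  rw [gaussianReal_of_var_ne_zero 0 one_ne_zero]
  congr 1
  funext x
  rw [gaussianPDF, gaussianPDFReal, ENNReal.ofReal]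
  norm_num
  ring_nf

lemma measurable_stdpdf_nnreal :
    Measurable (fun x : ℝ => ((√(2 * π))⁻¹ * Real.exp (-(1/2) * x ^ 2)).toNNReal) :=
  (measurable_const.mul ((measurable_id.pow_const 2).const_mul _).exp).real_toNNReal

lemma integral_gaussianReal_std (f : ℝ → ℝ) :
    ∫ x, f x ∂(gaussianReal 0 1)
      = ∫ x, ((√(2 * π))⁻¹ * Real.exp (-(1/2) * x ^ 2)) * f x := by
  rw [gaussianReal_std_density, integral_withDensity_eq_integral_smul measurable_stdpdf_nnreal]
  congr 1
  funext x
  rw [NNReal.smul_def, Real.coe_toNNReal]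
  · rfl
  · positivity

lemma integrable_pow_gaussianReal (k : ℕ) :
    Integrable (fun x : ℝ => x ^ k) (gaussianReal 0 1) := by
  rw [gaussianReal_std_density, integrable_withDensity_iff
    measurable_stdpdf_nnreal.coe_nnreal_ennreal (ae_of_all _ fun x => ENNReal.coe_lt_top)]
  apply Integrable.congr (((integrable_pow_mul_gauss k).const_mul ((√(2 * π))⁻¹)))
  refine ae_of_all _ fun x => ?_
  simp only [ENNReal.coe_toReal]
  rw [Real.coe_toNNReal _ (by positivity)]
  ring

lemma sqrt_two_pi_pos : (0:ℝ) < √(2 * π) := Real.sqrt_pos.mpr (by positivity)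

lemma gauss_mo (k : ℕ) :
    ∫ x : ℝ, x ^ k ∂(gaussianReal 0 1)
      = (√(2 * π))⁻¹ * ∫ x : ℝ, x ^ k * Real.exp (-(1/2) * x ^ 2) := by
  rw [integral_gaussianReal_std]
  rw [show (fun x : ℝ => ((√(2 * π))⁻¹ * Real.exp (-(1/2) * x ^ 2)) * x ^ k)
      = fun x : ℝ => (√(2 * π))⁻¹ * (x ^ k * Real.exp (-(1/2) * x ^ 2)) from by funext x; ring,
    integral_const_mul]

lemma gauss_mo0 : ∫ x : ℝ, x ^ 0 ∂(gaussianReal 0 1) = 1 := by simp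

lemma gauss_mo1 : ∫ x : ℝ, x ^ 1 ∂(gaussianReal 0 1) = 0 := by
  rw [gauss_mo]
  simp only [pow_one]
  rw [gauss_G1, mul_zero]

lemma gauss_mo2 : ∫ x : ℝ, x ^ 2 ∂(gaussianReal 0 1) = 1 := by
  rw [gauss_mo]
  have h := gauss_rec 0
  simp only [pow_zero, one_mul, Nat.cast_zero, zero_add] at h
  rw [h, gauss_G0, inv_mul_cancel₀ sqrt_two_pi_pos.ne']

lemma gauss_mo4 : ∫ x : ℝ, x ^ 4 ∂(gaussianReal 0 1) = 3 := by
  rw [gauss_mo]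
  have h2 := gauss_rec 0
  simp only [pow_zero, one_mul, Nat.cast_zero, zero_add] at h2
  have h4 := gauss_rec 2
  simp only [Nat.cast_ofNat] at h4
  norm_num at h4
  simp only [show ∀ x : ℝ, -((1:ℝ)/2 * x ^ 2) = -(1/2:ℝ) * x ^ 2 from fun x => by ring] at h4
  rw [h4, h2, gauss_G0]
  rw [show (√(2 * π))⁻¹ * (3 * √(2 * π)) = 3 * ((√(2 * π))⁻¹ * √(2 * π)) from by ring,
    inv_mul_cancel₀ sqrt_two_pi_pos.ne', mul_one]

end GaussMoments

section MatrixLemmas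
variable {d : ℕ} {S : Matrix (Fin d) (Fin d) ℝ}

lemma entry_symm (hS : S.PosSemidef) (p q : Fin d) : S q p = S p q := by
  have h := hS.1
  have := congrFun (congrFun h.symm q) p
  simpa [Matrix.conjTranspose_apply] using this

lemma quad_eval (hS : S.PosSemidef) (p q : Fin d) (hpq : p ≠ q) (t : ℝ) :
    0 ≤ S p p * (t * t) + (2 * S p q) * t + S q q := by
  set v : Fin d → ℝ := fun m => (if p = m then t else 0) + (if q = m then 1 else 0) with hv
  have h := hS.dotProduct_mulVec_nonneg v
  have hstar : star v = v := by
    funext m; simp [hv]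
  rw [hstar] at h
  have hmv : ∀ m, (S *ᵥ v) m = S m p * t + S m q := by
    intro m
    simp only [Matrix.mulVec, dotProduct, hv]
    simp only [show ∀ n, S m n * ((if p = n then t else 0) + (if q = n then 1 else 0))
        = (if p = n then S m n * t else 0) + (if q = n then S m n else 0) from
      fun n => by by_cases h1 : p = n <;> by_cases h2 : q = n <;> simp [h1, h2] <;> ring]
    rw [Finset.sum_add_distrib, Finset.sum_ite_eq, Finset.sum_ite_eq]
    simp
  have hdot : dotProduct v (S *ᵥ v) = S p p * (t * t) + (2 * S p q) * t + S q q := by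
    simp only [dotProduct, hmv]
    simp only [show ∀ m, v m * (S m p * t + S m q)
        = (if p = m then (S m p * t + S m q) * t else 0)
          + (if q = m then S m p * t + S m q else 0) from
      fun m => by simp only [hv]; by_cases h1 : p = m <;> by_cases h2 : q = m <;>
        simp [h1, h2] <;> ring]
    rw [Finset.sum_add_distrib, Finset.sum_ite_eq, Finset.sum_ite_eq]
    simp only [Finset.mem_univ, if_true]
    rw [entry_symm hS p q]
    ring
  rw [hdot] at h
  exact h

lemma entry_sq_le (hS : S.PosSemidef) (p q : Fin d) (hpq : p ≠ q) :
    S p q ^ 2 ≤ S p p * S q q := by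
  have h := discrim_le_zero (quad_eval hS p q hpq)
  rw [discrim] at h
  nlinarith

lemma diag_nonneg' (hS : S.PosSemidef) (p : Fin d) : 0 ≤ S p p := by
  set v : Fin d → ℝ := fun m => if p = m then 1 else 0 with hv
  have h := hS.dotProduct_mulVec_nonneg v
  have hstar : star v = v := by funext m; simp [hv]
  rw [hstar] at h
  have hdot : dotProduct v (S *ᵥ v) = S p p := by
    simp only [dotProduct, Matrix.mulVec, hv]
    simp only [show ∀ m, (if p = m then (1:ℝ) else 0) * (∑ n, S m n * if p = n then (1:ℝ) else 0)
        = if p = m then S m p else 0 from fun m => by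
      simp only [show ∀ n, S m n * (if p = n then (1:ℝ) else 0) = if p = n then S m n else 0 from
        fun n => by by_cases h1 : p = n <;> simp [h1]]
      rw [Finset.sum_ite_eq]
      by_cases h1 : p = m <;> simp [h1]]
    rw [Finset.sum_ite_eq]
    simp
  rw [hdot] at h
  exact h

end MatrixLemmas

section StdGaussianMonomials
variable {d : ℕ}

instance : IsProbabilityMeasure (stdGaussian d) := by
  unfold _root_.stdGaussian; infer_instance

/-- count of index m among i,j,k,l -/
def cnt4 {d : ℕ} (i j k l m : Fin d) : ℕ :=
  (if i = m then 1 else 0) + ((if j = m then 1 else 0)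
    + ((if k = m then 1 else 0) + (if l = m then 1 else 0)))

lemma monomial4_eq_prod (i j k l : Fin d) (z : Fin d → ℝ) :
    z i * z j * z k * z l = ∏ m, z m ^ cnt4 i j k l m := by
  unfold cnt4
  simp only [pow_add, pow_ite, pow_one, pow_zero]
  rw [Finset.prod_mul_distrib, Finset.prod_mul_distrib, Finset.prod_mul_distrib]
  simp only [Finset.prod_ite_eq, Finset.mem_univ, if_true]
  ring

lemma integral_monomial4 (i j k l : Fin d) :
    ∫ z, z i * z j * z k * z l ∂(stdGaussian d)
      = ∏ m, ∫ x : ℝ, x ^ cnt4 i j k l m ∂(gaussianReal 0 1) := by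
  simp_rw [monomial4_eq_prod]
  letI : MeasureSpace ℝ := ⟨gaussianReal 0 1⟩
  haveI : IsProbabilityMeasure (volume : Measure ℝ) := instIsProbabilityMeasureGaussianReal 0 1
  haveI : SigmaFinite (volume : Measure ℝ) := inferInstance
  exact MeasureTheory.integral_fintype_prod_eq_prod (ι := Fin d)
    (fun m (x : ℝ) => x ^ cnt4 i j k l m)

lemma integrable_monomial4 (i j k l : Fin d) :
    Integrable (fun z : Fin d → ℝ => z i * z j * z k * z l) (stdGaussian d) := by
  have : (fun z : Fin d → ℝ => z i * z j * z k * z l)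
      = fun z => ∏ m, z m ^ cnt4 i j k l m := by
    funext z; exact monomial4_eq_prod i j k l z
  rw [this]
  letI : MeasureSpace ℝ := ⟨gaussianReal 0 1⟩
  haveI : IsProbabilityMeasure (volume : Measure ℝ) := instIsProbabilityMeasureGaussianReal 0 1
  haveI : SigmaFinite (volume : Measure ℝ) := inferInstance
  exact MeasureTheory.Integrable.fintype_prod (fun m => integrable_pow_gaussianReal _)

def cnt2 {d : ℕ} (p q m : Fin d) : ℕ :=
  (if p = m then 1 else 0) + (if q = m then 1 else 0)
lemma monomial2_eq_prod (p q : Fin d) (z : Fin d → ℝ) :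
    z p * z q = ∏ m, z m ^ cnt2 p q m := by
  unfold cnt2
  simp only [pow_add, pow_ite, pow_one, pow_zero]
  rw [Finset.prod_mul_distrib]
  simp only [Finset.prod_ite_eq, Finset.mem_univ, if_true]

lemma integral_monomial2 (p q : Fin d) :
    ∫ z, z p * z q ∂(stdGaussian d)
      = ∏ m, ∫ x : ℝ, x ^ cnt2 p q m ∂(gaussianReal 0 1) := by
  simp_rw [monomial2_eq_prod]
  letI : MeasureSpace ℝ := ⟨gaussianReal 0 1⟩
  haveI : IsProbabilityMeasure (volume : Measure ℝ) := instIsProbabilityMeasureGaussianReal 0 1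
  haveI : SigmaFinite (volume : Measure ℝ) := inferInstance
  exact MeasureTheory.integral_fintype_prod_eq_prod (ι := Fin d)
    (fun m (x : ℝ) => x ^ cnt2 p q m)

lemma integrable_monomial2 (p q : Fin d) :
    Integrable (fun z : Fin d → ℝ => z p * z q) (stdGaussian d) := by
  have h : (fun z : Fin d → ℝ => z p * z q) = fun z => ∏ m, z m ^ cnt2 p q m := by
    funext z; exact monomial2_eq_prod p q z
  rw [h]
  letI : MeasureSpace ℝ := ⟨gaussianReal 0 1⟩
  haveI : IsProbabilityMeasure (volume : Measure ℝ) := instIsProbabilityMeasureGaussianReal 0 1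
  haveI : SigmaFinite (volume : Measure ℝ) := inferInstance
  exact MeasureTheory.Integrable.fintype_prod (fun m => integrable_pow_gaussianReal _)

lemma gauss_mo0' : ∫ x : ℝ, x ^ 0 ∂(gaussianReal 0 1) = 1 := by simp

lemma stdGaussian_pair (p q : Fin d) :
    ∫ z, z p * z q ∂(stdGaussian d) = if p = q then 1 else 0 := by
  rw [integral_monomial2]
  by_cases h : p = q
  · subst h
    simp only [if_true]
    have hm : ∀ m : Fin d, (∫ x : ℝ, x ^ cnt2 p p m ∂(gaussianReal 0 1))
        = if p = m then 1 else 1 := by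
      intro m
      unfold cnt2
      by_cases h2 : p = m <;> simp [h2, gauss_mo2, gauss_mo0']
    simp_rw [hm]
    simp
  · rw [if_neg h]
    refine Finset.prod_eq_zero (Finset.mem_univ p) ?_
    unfold cnt2
    rw [if_pos rfl, if_neg (fun hh => h hh.symm), gauss_mo1]

lemma integral_sq_sq (i k : Fin d) :
    ∫ z, z i * z i * z k * z k ∂(stdGaussian d) = if i = k then 3 else 1 := by
  rw [integral_monomial4]
  by_cases h : i = k
  · subst h
    rw [if_pos rfl]
    have hm : ∀ m : Fin d, (∫ x : ℝ, x ^ cnt4 i i i i m ∂(gaussianReal 0 1))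
        = if i = m then 3 else 1 := by
      intro m
      unfold cnt4
      by_cases h2 : i = m
      · subst h2
        rw [if_pos rfl, if_pos rfl]
        norm_num [gauss_mo4]
      · rw [if_neg h2, if_neg h2]
        norm_num [gauss_mo0']
    simp_rw [hm]
    simp [Finset.prod_ite_eq]
  · rw [if_neg h]
    refine Finset.prod_eq_one fun m _ => ?_
    unfold cnt4
    by_cases h1 : i = m
    · subst h1
      rw [if_pos rfl, if_neg (show k ≠ i from fun hh => h hh.symm)]
      norm_num [gauss_mo2]
    · by_cases h2 : k = m
      · subst h2
        rw [if_neg h, if_pos rfl]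
        norm_num [gauss_mo2]
      · rw [if_neg h1, if_neg h2]
        norm_num [gauss_mo0']

lemma integral_offdiag (i j k l : Fin d) (hij : i ≠ j) (hkl : k ≠ l) :
    ∫ z, z i * z j * z k * z l ∂(stdGaussian d)
      = (if i = k ∧ j = l then 1 else 0) + (if i = l ∧ j = k then 1 else 0) := by
  rw [integral_monomial4]
  by_cases h1 : i = k ∧ j = l
  · obtain ⟨hik, hjl⟩ := h1
    subst hik; subst hjl
    have hnot : ¬ (i = j ∧ j = i) := fun ⟨a, _⟩ => hij a
    rw [if_pos ⟨rfl, rfl⟩, if_neg hnot]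
    have hm : ∀ m : Fin d, (∫ x : ℝ, x ^ cnt4 i j i j m ∂(gaussianReal 0 1)) = 1 := by
      intro m
      unfold cnt4
      by_cases hA : i = m
      · subst hA
        rw [if_pos rfl, if_neg (show j ≠ i from fun hh => hij hh.symm)]
        norm_num [gauss_mo2]
      · by_cases hB : j = m
        · subst hB
          rw [if_neg hij, if_pos rfl]
          norm_num [gauss_mo2]
        · rw [if_neg hA, if_neg hB]
          norm_num [gauss_mo0']
    simp_rw [hm]
    simp
  · by_cases h2 : i = l ∧ j = k
    · obtain ⟨hil, hjk⟩ := h2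
      subst hil; subst hjk
      have hnot : ¬ (i = j ∧ j = i) := fun ⟨a, _⟩ => hij a
      rw [if_neg hnot, if_pos ⟨rfl, rfl⟩]
      have hm : ∀ m : Fin d, (∫ x : ℝ, x ^ cnt4 i j j i m ∂(gaussianReal 0 1)) = 1 := by
        intro m
        unfold cnt4
        by_cases hA : i = m
        · subst hA
          rw [if_pos rfl, if_neg (show j ≠ i from fun hh => hij hh.symm)]
          norm_num [gauss_mo2]
        · by_cases hB : j = m
          · subst hB
            rw [if_neg hij, if_pos rfl]
            norm_num [gauss_mo2]
          · rw [if_neg hA, if_neg hB]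
            norm_num [gauss_mo0']
      simp_rw [hm]
      simp
    · rw [if_neg h1, if_neg h2, add_zero]
      have hw : ∃ w : Fin d, cnt4 i j k l w = 1 := by
        by_cases hik : i = k
        · subst hik
          have hjl : j ≠ l := fun hh => h1 ⟨rfl, hh⟩
          refine ⟨j, ?_⟩
          unfold cnt4
          rw [if_neg hij, if_pos rfl, if_neg (show l ≠ j from fun hh => hjl hh.symm)]
        · by_cases hil : i = l
          · subst hil
            have hjk : j ≠ k := fun hh => h2 ⟨rfl, hh⟩
            refine ⟨j, ?_⟩
            unfold cnt4
            rw [if_neg hij, if_pos rfl, if_neg (show k ≠ j from fun hh => hjk hh.symm)]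
          · refine ⟨i, ?_⟩
            unfold cnt4
            rw [if_pos rfl, if_neg (show j ≠ i from fun hh => hij hh.symm),
              if_neg (show k ≠ i from fun hh => hik hh.symm),
              if_neg (show l ≠ i from fun hh => hil hh.symm)]
      obtain ⟨w, hw⟩ := hw
      refine Finset.prod_eq_zero (Finset.mem_univ w) ?_
      rw [hw, gauss_mo1]

end StdGaussianMonomials

section QuadForm
variable {d : ℕ}
/-- quadratic form in z with coefficients c -/
noncomputable def qf (c : Fin d → Fin d → ℝ) (z : Fin d → ℝ) : ℝ :=
  ∑ p, ∑ q, c p q * (z p * z q)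

lemma qf_sq_expand' (c : Fin d → Fin d → ℝ) (z : Fin d → ℝ) :
    qf c z ^ 2 = ∑ p, ∑ r, ∑ q, ∑ s,
      (c p q * c r s) * (z p * z q * z r * z s) := by
  rw [sq, qf]
  rw [Finset.sum_mul_sum]
  refine Finset.sum_congr rfl fun p _ => ?_
  refine Finset.sum_congr rfl fun r _ => ?_
  rw [Finset.sum_mul_sum]
  refine Finset.sum_congr rfl fun q _ => ?_
  refine Finset.sum_congr rfl fun s _ => ?_
  ring

lemma qf_sq_expand (c : Fin d → Fin d → ℝ) (z : Fin d → ℝ) :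
    qf c z ^ 2 = ∑ p, ∑ q, ∑ r, ∑ s,
      (c p q * c r s) * (z p * z q * z r * z s) := by
  rw [qf_sq_expand']
  exact Finset.sum_congr rfl fun p _ => Finset.sum_comm

lemma integrable_qf_sq (c : Fin d → Fin d → ℝ) :
    Integrable (fun z => qf c z ^ 2) (stdGaussian d) := by
  simp only [qf_sq_expand]
  refine integrable_finset_sum _ fun p _ => ?_
  refine integrable_finset_sum _ fun q _ => ?_
  refine integrable_finset_sum _ fun r _ => ?_
  refine integrable_finset_sum _ fun s _ => ?_
  exact (integrable_monomial4 p q r s).const_mul _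

lemma integral_qf_sq (c : Fin d → Fin d → ℝ) :
    ∫ z, qf c z ^ 2 ∂(stdGaussian d)
      = ∑ p, ∑ q, ∑ r, ∑ s,
        (c p q * c r s) * ∫ z, z p * z q * z r * z s ∂(stdGaussian d) := by
  simp only [qf_sq_expand]
  rw [integral_finset_sum _ fun p _ => integrable_finset_sum _ fun q _ =>
    integrable_finset_sum _ fun r _ => integrable_finset_sum _ fun s _ =>
      (integrable_monomial4 p q r s).const_mul _]
  refine Finset.sum_congr rfl fun p _ => ?_
  rw [integral_finset_sum _ fun q _ => integrable_finset_sum _ fun r _ =>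
    integrable_finset_sum _ fun s _ => (integrable_monomial4 p q r s).const_mul _]
  refine Finset.sum_congr rfl fun q _ => ?_
  rw [integral_finset_sum _ fun r _ => integrable_finset_sum _ fun s _ =>
    (integrable_monomial4 p q r s).const_mul _]
  refine Finset.sum_congr rfl fun r _ => ?_
  rw [integral_finset_sum _ fun s _ => (integrable_monomial4 p q r s).const_mul _]
  refine Finset.sum_congr rfl fun s _ => ?_
  exact integral_const_mul _ _

section Sbounds
variable {S : Matrix (Fin d) (Fin d) ℝ} (hS : S.PosSemidef)

noncomputable def cD (S : Matrix (Fin d) (Fin d) ℝ) : Fin d → Fin d → ℝ :=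
  fun p q => if p = q then S p p else 0
noncomputable def cO (S : Matrix (Fin d) (Fin d) ℝ) : Fin d → Fin d → ℝ :=
  fun p q => if p = q then 0 else S p q

lemma qf_split (z : Fin d → ℝ) : qf S z = qf (cD S) z + qf (cO S) z := by
  unfold qf cD cO
  rw [← Finset.sum_add_distrib]
  refine Finset.sum_congr rfl fun p _ => ?_
  rw [← Finset.sum_add_distrib]
  refine Finset.sum_congr rfl fun q _ => ?_
  by_cases h : p = q
  · subst h; simp
  · simp [h]

lemma trace_eq_sum_diag : S.trace = ∑ p, S p p := rfl

lemma integral_qf_D_sq (hS : S.PosSemidef) :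
    ∫ z, qf (cD S) z ^ 2 ∂(stdGaussian d) ≤ 3 * S.trace ^ 2 := by
  rw [integral_qf_sq]
  have hterm : ∀ p q r s : Fin d,
      (cD S p q * cD S r s) * ∫ z, z p * z q * z r * z s ∂(stdGaussian d)
        = if r = s then (if p = q then S p p * S r r * (if p = r then 3 else 1) else 0)
          else 0 := by
    intro p q r s
    by_cases hpq : p = q
    · by_cases hrs : r = s
      · subst hpq; subst hrs
        unfold cD
        rw [integral_sq_sq]
        simp only [eq_self_iff_true, if_true]
        try ring
      · unfold cD
        simp [hrs]
    · unfold cD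
      by_cases hrs : r = s <;> simp [hrs, hpq]
  simp only [hterm]
  have hsum : ∀ p q r : Fin d,
      (∑ s, if r = s then (if p = q then S p p * S r r * (if p = r then 3 else 1) else 0) else 0)
        = if p = q then S p p * S r r * (if p = r then 3 else 1) else 0 := by
    intro p q r
    rw [Finset.sum_ite_eq]
    simp
  simp only [hsum]
  have hsum2 : ∀ p q : Fin d,
      (∑ r, if p = q then S p p * S r r * (if p = r then 3 else 1) else 0)
        = if p = q then (∑ r, S p p * S r r * (if p = r then 3 else 1)) else 0 := by
    intro p q
    by_cases h : p = q <;> simp [h]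
  simp only [hsum2]
  have hsum3 : ∀ p : Fin d,
      (∑ q, if p = q then (∑ r, S p p * S r r * (if p = r then 3 else 1)) else 0)
        = ∑ r, S p p * S r r * (if p = r then 3 else 1) := by
    intro p
    rw [Finset.sum_ite_eq]
    simp
  simp only [hsum3]
  have hb : ∀ p r : Fin d, S p p * S r r * (if p = r then 3 else 1) ≤ 3 * (S p p * S r r) := by
    intro p r
    have h1 : 0 ≤ S p p * S r r := mul_nonneg (diag_nonneg' hS p) (diag_nonneg' hS r)
    by_cases h : p = r <;> simp [h] <;> nlinarith
  calc (∑ p, ∑ r, S p p * S r r * (if p = r then 3 else 1))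
      ≤ ∑ p, ∑ r, 3 * (S p p * S r r) :=
        Finset.sum_le_sum fun p _ => Finset.sum_le_sum fun r _ => hb p r
    _ = 3 * S.trace ^ 2 := by
        rw [trace_eq_sum_diag (S := S), sq, Finset.sum_mul_sum]
        rw [Finset.mul_sum]
        refine Finset.sum_congr rfl fun p _ => ?_
        rw [Finset.mul_sum]
  
lemma integral_qf_O_sq (hS : S.PosSemidef) :
    ∫ z, qf (cO S) z ^ 2 ∂(stdGaussian d) ≤ 2 * S.trace ^ 2 := by
  rw [integral_qf_sq]
  have hterm : ∀ p q r s : Fin d,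
      (cO S p q * cO S r s) * ∫ z, z p * z q * z r * z s ∂(stdGaussian d)
        = if p = q then 0 else
            (S p q * S r s) * ((if p = r ∧ q = s then 1 else 0)
              + (if p = s ∧ q = r then 1 else 0)) := by
    intro p q r s
    by_cases hpq : p = q
    · unfold cO; rw [if_pos hpq, if_pos hpq, zero_mul, zero_mul]
    · rw [if_neg hpq]
      by_cases hrs : r = s
      · unfold cO
        rw [if_neg hpq, if_pos hrs, mul_zero, zero_mul]
        have h1 : ¬(p = r ∧ q = s) := by
          rintro ⟨h1, h2⟩; exact hpq (h1.trans (hrs.trans h2.symm))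
        have h2 : ¬(p = s ∧ q = r) := by
          rintro ⟨h1, h2⟩; exact hpq (h1.trans (hrs.symm.trans h2.symm))
        rw [if_neg h1, if_neg h2]
        ring
      · unfold cO
        rw [if_neg hpq, if_neg hrs, integral_offdiag p q r s hpq hrs]
  simp only [hterm]
  have hinner : ∀ p q : Fin d,
      (∑ r, ∑ s, if p = q then 0 else
          (S p q * S r s) * ((if p = r ∧ q = s then 1 else 0)
            + (if p = s ∧ q = r then 1 else 0)))
        = if p = q then 0 else 2 * S p q ^ 2 := by
    intro p q
    by_cases hpq : p = q
    · simp [hpq]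
    · simp only [if_neg hpq]
      have hexp : ∀ r s : Fin d,
          (S p q * S r s) * ((if p = r ∧ q = s then 1 else 0)
            + (if p = s ∧ q = r then 1 else 0))
          = (if p = r then (if q = s then S p q * S r s else 0) else 0)
            + (if p = s then (if q = r then S p q * S r s else 0) else 0) := by
        intro r s
        simp only [mul_add, mul_ite, mul_one, mul_zero, ite_and]
      simp only [hexp]
      simp only [Finset.sum_add_distrib]
      have hA : (∑ r, ∑ s, if p = r then (if q = s then S p q * S r s else 0) else 0)
          = S p q ^ 2 := by
        have h1 : ∀ r : Fin d, (∑ s, if p = r then (if q = s then S p q * S r s else 0) else 0)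
            = if p = r then S p q * S r q else 0 := by
          intro r
          by_cases h : p = r
          · simp only [if_pos h]
            rw [Finset.sum_ite_eq]
            simp
          · simp [h]
        simp only [h1]
        rw [Finset.sum_ite_eq]
        simp [sq]
      have hB : (∑ r, ∑ s, if p = s then (if q = r then S p q * S r s else 0) else 0)
          = S p q ^ 2 := by
        have h1 : ∀ r : Fin d, (∑ s, if p = s then (if q = r then S p q * S r s else 0) else 0)
            = if q = r then S p q * S r p else 0 := by
          intro r
          by_cases h : q = r
          · subst h
            simp only [if_pos rfl]
            rw [Finset.sum_ite_eq]
            simp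
          · simp [h]
        simp only [h1]
        rw [Finset.sum_ite_eq]
        simp only [Finset.mem_univ, if_true]
        rw [entry_symm hS q p, sq]
      rw [hA, hB]
      ring
  rw [show (∑ p, ∑ q, ∑ r, ∑ s, if p = q then 0 else
        (S p q * S r s) * ((if p = r ∧ q = s then 1 else 0)
          + (if p = s ∧ q = r then 1 else 0)))
      = ∑ p, ∑ q, if p = q then 0 else 2 * S p q ^ 2 from
    Finset.sum_congr rfl fun p _ => Finset.sum_congr rfl fun q _ => hinner p q]
  have hb : ∀ p q : Fin d, (if p = q then 0 else 2 * S p q ^ 2) ≤ 2 * (S p p * S q q) := by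
    intro p q
    by_cases h : p = q
    · simp only [if_pos h]
      subst h
      nlinarith [diag_nonneg' hS p]
    · simp only [if_neg h]
      nlinarith [entry_sq_le hS p q h]
  calc (∑ p, ∑ q, if p = q then 0 else 2 * S p q ^ 2)
      ≤ ∑ p, ∑ q, 2 * (S p p * S q q) :=
        Finset.sum_le_sum fun p _ => Finset.sum_le_sum fun q _ => hb p q
    _ = 2 * S.trace ^ 2 := by
        rw [trace_eq_sum_diag (S := S), sq, Finset.sum_mul_sum, Finset.mul_sum]
        refine Finset.sum_congr rfl fun p _ => ?_
        rw [Finset.mul_sum]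

lemma integral_qf_S_sq (hS : S.PosSemidef) :
    ∫ z, qf S z ^ 2 ∂(stdGaussian d) ≤ 10 * S.trace ^ 2 := by
  have hpt : ∀ z, qf S z ^ 2 ≤ 2 * qf (cD S) z ^ 2 + 2 * qf (cO S) z ^ 2 := by
    intro z
    rw [qf_split (S := S) z]
    nlinarith [sq_nonneg (qf (cD S) z - qf (cO S) z)]
  have hint : Integrable (fun z => 2 * qf (cD S) z ^ 2 + 2 * qf (cO S) z ^ 2) (stdGaussian d) :=
    ((integrable_qf_sq (cD S)).const_mul 2).add ((integrable_qf_sq (cO S)).const_mul 2)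
  calc ∫ z, qf S z ^ 2 ∂(stdGaussian d)
      ≤ ∫ z, (2 * qf (cD S) z ^ 2 + 2 * qf (cO S) z ^ 2) ∂(stdGaussian d) :=
        integral_mono (integrable_qf_sq S) hint hpt
    _ = 2 * (∫ z, qf (cD S) z ^ 2 ∂(stdGaussian d))
        + 2 * ∫ z, qf (cO S) z ^ 2 ∂(stdGaussian d) := by
        rw [integral_add ((integrable_qf_sq (cD S)).const_mul 2)
          ((integrable_qf_sq (cO S)).const_mul 2), integral_const_mul, integral_const_mul]
    _ ≤ 2 * (3 * S.trace ^ 2) + 2 * (2 * S.trace ^ 2) := by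
        have h1 := integral_qf_D_sq hS
        have h2 := integral_qf_O_sq hS
        linarith
    _ = 10 * S.trace ^ 2 := by ring

end Sbounds

variable {S : Matrix (Fin d) (Fin d) ℝ}

lemma Matrix.PosSemidef.sqrt_conjTranspose {n : Type*} [Fintype n] [DecidableEq n]
    {A : Matrix n n ℝ} (hA : A.PosSemidef) : hA.sqrtᴴ = hA.sqrt := by
  unfold Matrix.PosSemidef.sqrt
  rw [Matrix.conjTranspose_mul, Matrix.conjTranspose_mul, Matrix.diagonal_conjTranspose]
  simp [Matrix.mul_assoc, Matrix.star_eq_conjTranspose, Matrix.conjTranspose_eq_transpose_of_trivial]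

lemma Matrix.PosSemidef.sqrt_mul_self {n : Type*} [Fintype n] [DecidableEq n]
    {A : Matrix n n ℝ} (hA : A.PosSemidef) : hA.sqrt * hA.sqrt = A := by
  have hU : (star hA.1.eigenvectorUnitary : Matrix n n ℝ) * (hA.1.eigenvectorUnitary : Matrix n n ℝ) = 1 :=
    Unitary.coe_star_mul_self _
  have hD : diagonal ((fun x : ℝ => x) ∘ (fun x : ℝ => Real.sqrt x) ∘ hA.1.eigenvalues) *
      diagonal ((fun x : ℝ => x) ∘ (fun x : ℝ => Real.sqrt x) ∘ hA.1.eigenvalues)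
        = diagonal (RCLike.ofReal ∘ hA.1.eigenvalues) := by
    rw [diagonal_mul_diagonal]; congr 1; funext i
    simp [Real.mul_self_sqrt (hA.eigenvalues_nonneg i)]
  conv_rhs => rw [hA.1.spectral_theorem, Unitary.conjStarAlgAut_apply]
  unfold Matrix.PosSemidef.sqrt
  rw [← hD]
  simp only [Matrix.mul_assoc]
  rw [← Matrix.mul_assoc (star _ : Matrix n n ℝ) (hA.1.eigenvectorUnitary : Matrix n n ℝ), hU,
    Matrix.one_mul]

lemma measurable_sqrtMulVec (hS : S.PosSemidef) :
    Measurable (fun z : Fin d → ℝ => hS.sqrt.mulVec z) := by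
  apply measurable_pi_lambda
  intro i
  simp only [Matrix.mulVec, dotProduct]
  exact Finset.measurable_sum _ fun p _ => (measurable_pi_apply p).const_mul _

lemma mulVec_apply' (hS : S.PosSemidef) (z : Fin d → ℝ) (i : Fin d) :
    hS.sqrt.mulVec z i = ∑ p, hS.sqrt i p * z p := by
  simp [Matrix.mulVec, dotProduct]

lemma sqrt_entry_symm (hS : S.PosSemidef) (p q : Fin d) : hS.sqrt q p = hS.sqrt p q :=
  by
    have h := congrFun (congrFun hS.sqrt_conjTranspose q) p
    simpa [Matrix.conjTranspose_apply] using h.symm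

lemma A_sum (hS : S.PosSemidef) (i j : Fin d) :
    ∑ p, hS.sqrt i p * hS.sqrt j p = S i j := by
  have h := hS.sqrt_mul_self
  have h2 : (hS.sqrt * hS.sqrt) i j = S i j := by rw [h]
  rw [Matrix.mul_apply] at h2
  rw [← h2]
  exact Finset.sum_congr rfl fun p _ => by rw [sqrt_entry_symm hS p j]

lemma A_sum' (hS : S.PosSemidef) (p q : Fin d) :
    ∑ j, hS.sqrt j p * hS.sqrt j q = S p q := by
  rw [← A_sum hS p q]
  exact Finset.sum_congr rfl fun j _ => by
    rw [sqrt_entry_symm hS j p, sqrt_entry_symm hS j q]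

lemma pair_comp_expand (hS : S.PosSemidef) (i j : Fin d) (z : Fin d → ℝ) :
    hS.sqrt.mulVec z i * hS.sqrt.mulVec z j
      = ∑ p, ∑ q, (hS.sqrt i p * hS.sqrt j q) * (z p * z q) := by
  rw [mulVec_apply' hS z i, mulVec_apply' hS z j, Finset.sum_mul_sum]
  exact Finset.sum_congr rfl fun p _ => Finset.sum_congr rfl fun q _ => by ring

lemma integrable_pair_comp (hS : S.PosSemidef) (i j : Fin d) :
    Integrable (fun z : Fin d → ℝ => hS.sqrt.mulVec z i * hS.sqrt.mulVec z j)
      (stdGaussian d) := by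
  simp only [pair_comp_expand hS i j]
  refine integrable_finset_sum _ fun p _ => integrable_finset_sum _ fun q _ =>
    (integrable_monomial2 p q).const_mul _

lemma integral_pair_comp (hS : S.PosSemidef) (i j : Fin d) :
    ∫ z, hS.sqrt.mulVec z i * hS.sqrt.mulVec z j ∂(stdGaussian d) = S i j := by
  simp only [pair_comp_expand hS i j]
  rw [integral_finset_sum _ fun p _ => integrable_finset_sum _ fun q _ =>
    (integrable_monomial2 p q).const_mul _]
  have hstep : ∀ p : Fin d,
      ∫ z, ∑ q, (hS.sqrt i p * hS.sqrt j q) * (z p * z q) ∂(stdGaussian d)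
        = hS.sqrt i p * hS.sqrt j p := by
    intro p
    rw [integral_finset_sum _ fun q _ => (integrable_monomial2 p q).const_mul _]
    have : ∀ q : Fin d, ∫ z, (hS.sqrt i p * hS.sqrt j q) * (z p * z q) ∂(stdGaussian d)
        = if p = q then hS.sqrt i p * hS.sqrt j q else 0 := by
      intro q
      rw [integral_const_mul, stdGaussian_pair p q]
      by_cases h : p = q <;> simp [h]
    simp only [this]
    rw [Finset.sum_ite_eq]
    simp
  calc (∑ p, ∫ z, ∑ q, (hS.sqrt i p * hS.sqrt j q) * (z p * z q) ∂(stdGaussian d))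
      = ∑ p, hS.sqrt i p * hS.sqrt j p := Finset.sum_congr rfl fun p _ => hstep p
    _ = S i j := A_sum hS i j

lemma quart_comp_expand (hS : S.PosSemidef) (i j k l : Fin d) (z : Fin d → ℝ) :
    (hS.sqrt.mulVec z i * hS.sqrt.mulVec z j) * (hS.sqrt.mulVec z k * hS.sqrt.mulVec z l)
      = ∑ p, ∑ q, ∑ r, ∑ s,
        (hS.sqrt i p * hS.sqrt j q * hS.sqrt k r * hS.sqrt l s) * (z p * z q * z r * z s) := by
  rw [pair_comp_expand hS i j, pair_comp_expand hS k l, Finset.sum_mul_sum]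
  refine Finset.sum_congr rfl fun p _ => ?_
  rw [Finset.sum_comm]
  refine Finset.sum_congr rfl fun q _ => ?_
  rw [Finset.sum_mul_sum]
  refine Finset.sum_congr rfl fun r _ => Finset.sum_congr rfl fun s _ => by ring

lemma integrable_quart_comp (hS : S.PosSemidef) (i j k l : Fin d) :
    Integrable (fun z : Fin d → ℝ =>
      (hS.sqrt.mulVec z i * hS.sqrt.mulVec z j) * (hS.sqrt.mulVec z k * hS.sqrt.mulVec z l))
      (stdGaussian d) := by
  simp only [quart_comp_expand hS i j k l]
  refine integrable_finset_sum _ fun p _ => integrable_finset_sum _ fun q _ =>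
    integrable_finset_sum _ fun r _ => integrable_finset_sum _ fun s _ =>
      (integrable_monomial4 p q r s).const_mul _

lemma measurable_pairfun (i j : Fin d) :
    Measurable (fun x : Fin d → ℝ => x i * x j) :=
  (measurable_pi_apply i).mul (measurable_pi_apply j)

lemma integrable_pair_nu (hS : S.PosSemidef) (i j : Fin d) :
    Integrable (fun x : Fin d → ℝ => x i * x j) (gaussianVec S hS) := by
  unfold gaussianVec
  rw [integrable_map_measure (measurable_pairfun i j).aestronglyMeasurable
    (measurable_sqrtMulVec hS).aemeasurable]
  exact integrable_pair_comp hS i j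

lemma integral_pair_nu (hS : S.PosSemidef) (i j : Fin d) :
    ∫ x, x i * x j ∂(gaussianVec S hS) = S i j := by
  unfold gaussianVec
  rw [integral_map (measurable_sqrtMulVec hS).aemeasurable
    (measurable_pairfun i j).aestronglyMeasurable]
  exact integral_pair_comp hS i j

lemma integrable_quart_nu (hS : S.PosSemidef) (i j k l : Fin d) :
    Integrable (fun x : Fin d → ℝ => (x i * x j) * (x k * x l)) (gaussianVec S hS) := by
  unfold gaussianVec
  rw [integrable_map_measure (g := fun x : Fin d → ℝ => (x i * x j) * (x k * x l)) ((measurable_pairfun i j).mul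
    (measurable_pairfun k l)).aestronglyMeasurable (measurable_sqrtMulVec hS).aemeasurable]
  exact integrable_quart_comp hS i j k l

lemma sumsq_eq_qf (hS : S.PosSemidef) (z : Fin d → ℝ) :
    (∑ j, (hS.sqrt.mulVec z j) ^ 2) = qf S z := by
  unfold qf
  calc (∑ j, (hS.sqrt.mulVec z j) ^ 2)
      = ∑ j, ∑ p, ∑ q, (hS.sqrt j p * hS.sqrt j q) * (z p * z q) := by
        refine Finset.sum_congr rfl fun j _ => ?_
        rw [sq]
        exact pair_comp_expand hS j j z
    _ = ∑ p, ∑ q, ∑ j, (hS.sqrt j p * hS.sqrt j q) * (z p * z q) := by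
        rw [Finset.sum_comm]
        exact Finset.sum_congr rfl fun p _ => Finset.sum_comm
    _ = ∑ p, ∑ q, S p q * (z p * z q) := by
        refine Finset.sum_congr rfl fun p _ => Finset.sum_congr rfl fun q _ => ?_
        rw [← Finset.sum_mul, A_sum' hS p q]

lemma integral_norm4_nu (hS : S.PosSemidef) :
    ∫ x, (∑ j, x j ^ 2) ^ 2 ∂(gaussianVec S hS) ≤ 10 * S.trace ^ 2 := by
  unfold gaussianVec
  rw [integral_map (measurable_sqrtMulVec hS).aemeasurable]
  · have heq : ∀ z : Fin d → ℝ, (∑ j, (hS.sqrt.mulVec z j) ^ 2) ^ 2 = qf S z ^ 2 := fun z => by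
      rw [sumsq_eq_qf hS z]
    simp only [heq]
    exact integral_qf_S_sq hS
  · exact ((Finset.measurable_sum _ fun j _ =>
      (measurable_pi_apply j).pow_const 2).pow_const 2).aestronglyMeasurable

end QuadForm

/-- For i.i.d. centered Gaussian vectors `X_1,…,X_n` with covariance `S` in
`ℝ^d` and sample covariance `Σ̂_n`: `E‖Σ̂_n − S‖₂² ≤ E‖X‖⁴/n`, and consequently
`(E‖Σ̂_n − S‖₂²)^{1/2} ≤ C ‖S‖ r(S)/√n` for a universal constant `C`,
where `r(S) = tr(S)/‖S‖` is the effective rank. -/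
theorem expected_frobenius_sq_sampleCov :
    ∃ C : ℝ, 0 < C ∧
      ∀ (d n : ℕ) (hn : 0 < n),
        ∀ (S : Matrix (Fin d) (Fin d) ℝ) (hS : S.PosSemidef),
          ∀ (Ω : Type) (mΩ : MeasurableSpace Ω) (μ : Measure Ω), IsProbabilityMeasure μ →
            ∀ X : Fin n → Ω → (Fin d → ℝ), (∀ i, Measurable (X i)) →
              iIndepFun X μ →
              (∀ i, Measure.map (X i) μ = gaussianVec S hS) →
              (∫ ω, ∑ i, ∑ j, ((sampleCov (fun k => X k ω) - S) i j) ^ 2 ∂μ ≤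
                  (∫ ω, vecNorm (X ⟨0, hn⟩ ω) ^ 4 ∂μ) / n) ∧
              Real.sqrt (∫ ω, ∑ i, ∑ j, ((sampleCov (fun k => X k ω) - S) i j) ^ 2 ∂μ) ≤
                C * matOpNorm S * effRank S / Real.sqrt n := by
  refine ⟨Real.sqrt 10, Real.sqrt_pos.mpr (by norm_num), ?_⟩
  intro d n hn S hS Ω mΩ μ hμ X hXm hXind hXmap
  have hne : (n:ℝ) ≠ 0 := Nat.cast_ne_zero.mpr hn.ne'
  have hnpos : (0:ℝ) < n := by exact_mod_cast hn
  -- transfer lemmas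
  have htrans_int : ∀ (F : (Fin d → ℝ) → ℝ), Measurable F → Integrable F (gaussianVec S hS) →
      ∀ k : Fin n, Integrable (fun ω => F (X k ω)) μ := by
    intro F hF hI k
    have h1 : Integrable F (Measure.map (X k) μ) := by rw [hXmap k]; exact hI
    exact (integrable_map_measure hF.aestronglyMeasurable (hXm k).aemeasurable).mp h1
  have htrans_val : ∀ (F : (Fin d → ℝ) → ℝ), Measurable F →
      ∀ k : Fin n, ∫ ω, F (X k ω) ∂μ = ∫ x, F x ∂(gaussianVec S hS) := by
    intro F hF k
    rw [← hXmap k, integral_map (hXm k).aemeasurable hF.aestronglyMeasurable]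
  -- g functions
  have hgmeas : ∀ i j : Fin d, Measurable (fun x : Fin d → ℝ => x i * x j - S i j) :=
    fun i j => (measurable_pairfun i j).sub measurable_const
  have hprobν : IsProbabilityMeasure (gaussianVec S hS) := by
    unfold gaussianVec
    exact Measure.isProbabilityMeasure_map (measurable_sqrtMulVec hS).aemeasurable
  have hgint : ∀ i j : Fin d, Integrable (fun x : Fin d → ℝ => x i * x j - S i j)
      (gaussianVec S hS) := fun i j => (integrable_pair_nu hS i j).sub (integrable_const _)
  have hgzero : ∀ i j : Fin d, ∫ x, (x i * x j - S i j) ∂(gaussianVec S hS) = 0 := by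
    intro i j
    rw [integral_sub (integrable_pair_nu hS i j) (integrable_const _),
      integral_pair_nu hS i j, integral_const]
    simp
  have hg2eq : ∀ i j : Fin d, (fun x : Fin d → ℝ => (x i * x j - S i j) * (x i * x j - S i j))
      = fun x => ((x i * x j) * (x i * x j) - (2 * S i j) * (x i * x j)) + (S i j) * (S i j) := by
    intro i j; funext x; ring
  have hg2int : ∀ i j : Fin d, Integrable (fun x : Fin d → ℝ =>
      (x i * x j - S i j) * (x i * x j - S i j)) (gaussianVec S hS) := by
    intro i j
    rw [hg2eq i j]
    exact ((integrable_quart_nu hS i j i j).sub ((integrable_pair_nu hS i j).const_mul _)).add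
      (integrable_const _)
  have hVle : ∀ i j : Fin d, ∫ x, (x i * x j - S i j) * (x i * x j - S i j) ∂(gaussianVec S hS)
      ≤ ∫ x, (x i * x j) * (x i * x j) ∂(gaussianVec S hS) := by
    intro i j
    have hq : Integrable (fun x : Fin d → ℝ => (x i * x j) * (x i * x j)) (gaussianVec S hS) :=
      integrable_quart_nu hS i j i j
    have hp2 : Integrable (fun x : Fin d → ℝ => (2 * S i j) * (x i * x j)) (gaussianVec S hS) :=
      (integrable_pair_nu hS i j).const_mul _
    have hd : Integrable (fun x : Fin d → ℝ =>
        (x i * x j) * (x i * x j) - (2 * S i j) * (x i * x j)) (gaussianVec S hS) := hq.sub hp2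
    rw [hg2eq i j, integral_add hd (integrable_const _),
      integral_sub hq hp2,
      integral_const_mul, integral_pair_nu hS i j, integral_const]
    simp only [probReal_univ, smul_eq_mul, one_mul]
    nlinarith [sq_nonneg (S i j)]
  have hsumU : (∑ i, ∑ j, ∫ x, (x i * x j) * (x i * x j) ∂(gaussianVec S hS))
      = ∫ x, (∑ j, x j ^ 2) ^ 2 ∂(gaussianVec S hS) := by
    have hpt : ∀ x : Fin d → ℝ, (∑ j, x j ^ 2)^2 = ∑ i, ∑ j, (x i * x j) * (x i * x j) := by
      intro x; rw [sq, Finset.sum_mul_sum]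
      exact Finset.sum_congr rfl fun i _ => Finset.sum_congr rfl fun j _ => by ring
    simp only [hpt]
    rw [integral_finset_sum _ fun i _ => integrable_finset_sum _ fun j _ =>
      integrable_quart_nu hS i j i j]
    exact Finset.sum_congr rfl fun i _ =>
      (integral_finset_sum _ fun j _ => integrable_quart_nu hS i j i j).symm
  -- mu-level
  have hYint : ∀ (i j : Fin d) (k : Fin n),
      Integrable (fun ω => X k ω i * X k ω j - S i j) μ :=
    fun i j k => htrans_int _ (hgmeas i j) (hgint i j) k
  have hYsqint : ∀ (i j : Fin d) (k : Fin n), Integrable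
      (fun ω => (X k ω i * X k ω j - S i j) * (X k ω i * X k ω j - S i j)) μ :=
    fun i j k => htrans_int _ ((hgmeas i j).mul (hgmeas i j)) (hg2int i j) k
  have hYzero : ∀ (i j : Fin d) (k : Fin n),
      ∫ ω, (X k ω i * X k ω j - S i j) ∂μ = 0 :=
    fun i j k => (htrans_val _ (hgmeas i j) k).trans (hgzero i j)
  have hYprodint : ∀ (i j : Fin d) (k l : Fin n), Integrable
      (fun ω => (X k ω i * X k ω j - S i j) * (X l ω i * X l ω j - S i j)) μ := by
    intro i j k l
    by_cases hkl : k = l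
    · subst hkl; exact hYsqint i j k
    · have hind : IndepFun (fun ω => X k ω i * X k ω j - S i j)
          (fun ω => X l ω i * X l ω j - S i j) μ :=
        (hXind.indepFun hkl).comp (hgmeas i j) (hgmeas i j)
      exact hind.integrable_mul (hYint i j k) (hYint i j l)
  have hterm : ∀ (i j : Fin d) (k l : Fin n),
      (∫ ω, (X k ω i * X k ω j - S i j) * (X l ω i * X l ω j - S i j) ∂μ)
        = if k = l then
            ∫ x, (x i * x j - S i j) * (x i * x j - S i j) ∂(gaussianVec S hS) else 0 := by
    intro i j k l
    by_cases hkl : k = l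
    · subst hkl
      rw [if_pos rfl]
      exact htrans_val _ ((hgmeas i j).mul (hgmeas i j)) k
    · rw [if_neg hkl]
      have hind : IndepFun (fun ω => X k ω i * X k ω j - S i j)
          (fun ω => X l ω i * X l ω j - S i j) μ :=
        (hXind.indepFun hkl).comp (hgmeas i j) (hgmeas i j)
      have h := hind.integral_mul_eq_mul_integral (hYint i j k).aestronglyMeasurable (hYint i j l).aestronglyMeasurable
      have h2 : ∫ ω, (X k ω i * X k ω j - S i j) * (X l ω i * X l ω j - S i j) ∂μ
          = (∫ ω, (X k ω i * X k ω j - S i j) ∂μ)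
            * ∫ ω, (X l ω i * X l ω j - S i j) ∂μ := h
      rw [h2, hYzero i j k, zero_mul]
  have hsumsq : ∀ i j : Fin d,
      ∫ ω, (∑ k, (X k ω i * X k ω j - S i j))^2 ∂μ
        = n * ∫ x, (x i * x j - S i j) * (x i * x j - S i j) ∂(gaussianVec S hS) := by
    intro i j
    have hexp : ∀ ω, (∑ k, (X k ω i * X k ω j - S i j))^2
        = ∑ k, ∑ l, (X k ω i * X k ω j - S i j) * (X l ω i * X l ω j - S i j) := by
      intro ω; rw [sq, Finset.sum_mul_sum]
    simp only [hexp]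
    rw [integral_finset_sum _ fun k _ => integrable_finset_sum _ fun l _ => hYprodint i j k l]
    have h1 : ∀ k : Fin n,
        (∫ ω, ∑ l, (X k ω i * X k ω j - S i j) * (X l ω i * X l ω j - S i j) ∂μ)
          = ∫ x, (x i * x j - S i j) * (x i * x j - S i j) ∂(gaussianVec S hS) := by
      intro k
      rw [integral_finset_sum _ fun l _ => hYprodint i j k l]
      simp only [hterm i j k]
      rw [Finset.sum_ite_eq]
      simp
    simp only [h1]
    rw [Finset.sum_const, Finset.card_univ, Fintype.card_fin, nsmul_eq_mul]
  -- entry formula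
  have hentry : ∀ (ω : Ω) (i j : Fin d), (sampleCov (fun k => X k ω) - S) i j
      = (n:ℝ)⁻¹ * ∑ k, (X k ω i * X k ω j - S i j) := by
    intro ω i j
    simp only [sampleCov, Matrix.sub_apply, Matrix.smul_apply, Matrix.sum_apply,
      Matrix.vecMulVec_apply, smul_eq_mul]
    rw [Finset.sum_sub_distrib, Finset.sum_const, Finset.card_univ, Fintype.card_fin,
      nsmul_eq_mul]
    field_simp
    try ring
  have hij : ∀ i j : Fin d, ∫ ω, ((sampleCov (fun k => X k ω) - S) i j)^2 ∂μ
      = (∫ x, (x i * x j - S i j) * (x i * x j - S i j) ∂(gaussianVec S hS)) / n := by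
    intro i j
    have hpt : ∀ ω, ((sampleCov (fun k => X k ω) - S) i j)^2
        = ((n:ℝ)⁻¹)^2 * (∑ k, (X k ω i * X k ω j - S i j))^2 := by
      intro ω; rw [hentry ω i j]; ring
    simp only [hpt]
    rw [integral_const_mul, hsumsq i j]
    field_simp
  have hentryint : ∀ i j : Fin d,
      Integrable (fun ω => ((sampleCov (fun k => X k ω) - S) i j)^2) μ := by
    intro i j
    have heq : (fun ω => ((sampleCov (fun k => X k ω) - S) i j)^2)
        = fun ω => ((n:ℝ)⁻¹)^2 * ∑ k, ∑ l,
            (X k ω i * X k ω j - S i j) * (X l ω i * X l ω j - S i j) := by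
      funext ω
      rw [hentry ω i j, mul_pow, sq (∑ k, (X k ω i * X k ω j - S i j)), Finset.sum_mul_sum]
    rw [heq]
    exact (integrable_finset_sum _ fun k _ =>
      integrable_finset_sum _ fun l _ => hYprodint i j k l).const_mul _
  have hLHS : ∫ ω, ∑ i, ∑ j, ((sampleCov (fun k => X k ω) - S) i j)^2 ∂μ
      = ∑ i, ∑ j,
        (∫ x, (x i * x j - S i j) * (x i * x j - S i j) ∂(gaussianVec S hS)) / n := by
    rw [integral_finset_sum _ fun i _ => integrable_finset_sum _ fun j _ => hentryint i j]
    refine Finset.sum_congr rfl fun i _ => ?_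
    rw [integral_finset_sum _ fun j _ => hentryint i j]
    exact Finset.sum_congr rfl fun j _ => hij i j
  have hRHS1 : ∫ ω, vecNorm (X ⟨0, hn⟩ ω) ^ 4 ∂μ
      = ∫ x, (∑ j, x j ^ 2) ^ 2 ∂(gaussianVec S hS) := by
    have hptw : ∀ x : Fin d → ℝ, vecNorm x ^ 4 = (∑ j, x j ^ 2) ^ 2 := by
      intro x
      unfold vecNorm
      have h0 : (0:ℝ) ≤ ∑ j, x j ^ 2 := Finset.sum_nonneg fun j _ => sq_nonneg _
      rw [show (4 : ℕ) = 2 * 2 from rfl, pow_mul, Real.sq_sqrt h0]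
    have hF : Measurable (fun x : Fin d → ℝ => vecNorm x ^ 4) := by
      unfold vecNorm
      exact ((Finset.measurable_sum _ fun j _ =>
        (measurable_pi_apply j).pow_const 2).sqrt.pow_const 4)
    rw [htrans_val _ hF ⟨0, hn⟩]
    simp only [hptw]
  have hkey : ∫ ω, ∑ i, ∑ j, ((sampleCov (fun k => X k ω) - S) i j)^2 ∂μ
      ≤ (∫ x, (∑ j, x j ^ 2) ^ 2 ∂(gaussianVec S hS)) / n := by
    rw [hLHS, ← hsumU]
    rw [show (∑ i, ∑ j, ∫ x, (x i * x j) * (x i * x j) ∂(gaussianVec S hS)) / (n:ℝ)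
        = ∑ i, ∑ j, (∫ x, (x i * x j) * (x i * x j) ∂(gaussianVec S hS)) / n from by
      rw [Finset.sum_div]
      exact Finset.sum_congr rfl fun i _ => by rw [Finset.sum_div]]
    refine Finset.sum_le_sum fun i _ => Finset.sum_le_sum fun j _ => ?_
    exact (div_le_div_iff_of_pos_right hnpos).mpr (hVle i j)
  constructor
  · rw [hRHS1]
    exact hkey
  · have htr0 : 0 ≤ S.trace := by
      have : S.trace = ∑ p, S p p := rfl
      rw [this]
      exact Finset.sum_nonneg fun p _ => diag_nonneg' hS p
    have hchain : ∫ ω, ∑ i, ∑ j, ((sampleCov (fun k => X k ω) - S) i j)^2 ∂μ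
        ≤ 10 * S.trace ^ 2 / n := by
      refine hkey.trans ?_
      gcongr
      exact integral_norm4_nu hS
    have hsqrt := Real.sqrt_le_sqrt hchain
    refine hsqrt.trans ?_
    have heq1 : Real.sqrt (10 * S.trace ^ 2 / n) = Real.sqrt 10 * S.trace / Real.sqrt n := by
      rw [Real.sqrt_div (by positivity), Real.sqrt_mul (by norm_num), Real.sqrt_sq htr0]
    rw [heq1]
    by_cases hop : matOpNorm S = 0
    · have hS0 : S = 0 := by
        have h1 : Matrix.toEuclideanCLM (𝕜 := ℝ) S = 0 := by
          have := hop
          unfold matOpNorm at this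
          exact norm_eq_zero.mp this
        have h2 := congrArg (Matrix.toEuclideanCLM (𝕜 := ℝ)).symm h1
        simpa using h2
      have htr : S.trace = 0 := by rw [hS0]; simp
      rw [htr, hop]
      simp
    · have hmul : matOpNorm S * effRank S = S.trace := by
        unfold effRank
        field_simp
      rw [mul_assoc, hmul]
end
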